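/- arXiv:2008.11460 — 8 statements merged into one kernel-verified Lean document; each statement's English description precedes it below -/
import Mathlib

section
/- Let a > 0, c > 0 and let j ≥ 1 be an integer. Define J(d) := ∫₁^∞ t^{j−3/2} · exp(−(a·√t − d·√(c/t))²) dt for d > 0. Then J(d) ≍ d^{j−1} as d → ∞; that is, there exist constants C₁ > 0, C₂ > 0 and d₀ > 0 such that C₁·d^{j−1} ≤ J(d) ≤ C₂·d^{j−1} for all d ≥ d₀. -/
open Real MeasureTheory Set

set_option maxHeartbeats 1000000

lemma sq_form {a c t : ℝ} (d : ℝ) (ha : 0 < a) (hc : 0 ≤ c) (ht : 0 < t) :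
    (a * Real.sqrt t - d * Real.sqrt (c / t)) ^ 2
      = a ^ 2 * (t - d * Real.sqrt c / a) ^ 2 / t := by
  rw [Real.sqrt_div hc]
  have hst : (0:ℝ) < Real.sqrt t := Real.sqrt_pos.mpr ht
  have h3 : Real.sqrt t * Real.sqrt t = t := Real.mul_self_sqrt ht.le
  field_simp
  rw [Real.sq_sqrt ht.le]; ring

lemma cont_main (a c d q : ℝ) :
    ContinuousOn (fun t : ℝ => t ^ q * Real.exp (-(a * Real.sqrt t - d * Real.sqrt (c / t)) ^ 2))
      (Set.Ioi (1:ℝ)) := by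
  apply ContinuousOn.mul
  · exact fun t ht =>
      (Real.continuousAt_rpow_const t q (Or.inl (ne_of_gt (lt_trans one_pos ht)))).continuousWithinAt
  · apply Real.continuous_exp.comp_continuousOn
    apply ContinuousOn.neg
    apply ContinuousOn.pow
    apply ContinuousOn.sub
    · exact (continuous_const.mul Real.continuous_sqrt).continuousOn
    · apply ContinuousOn.mul continuousOn_const
      apply Real.continuous_sqrt.comp_continuousOn
      exact continuousOn_const.div continuousOn_id (fun t ht => ne_of_gt (lt_trans one_pos ht))

lemma integ_main {a c : ℝ} (d q : ℝ) (ha : 0 < a) (hc : 0 < c) (hq : -1 < q) :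
    IntegrableOn (fun t : ℝ => t ^ q * Real.exp (-(a * Real.sqrt t - d * Real.sqrt (c / t)) ^ 2))
      (Set.Ioi (1:ℝ)) := by
  set t₀ : ℝ := d * Real.sqrt c / a with ht₀
  have hbd : IntegrableOn
      (fun t : ℝ => Real.exp (2 * a ^ 2 * t₀) * (t ^ q * Real.exp (-(a ^ 2) * t)))
      (Set.Ioi (1:ℝ)) := by
    have h0 : IntegrableOn (fun t : ℝ => t ^ q * Real.exp (-(a ^ 2) * t ^ (1:ℝ)))
        (Set.Ioi (0:ℝ)) := integrableOn_rpow_mul_exp_neg_mul_rpow hq zero_lt_one (by positivity)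
    simp only [Real.rpow_one] at h0
    exact (h0.mono_set (Set.Ioi_subset_Ioi zero_le_one)).const_mul _
  refine Integrable.mono' hbd ((cont_main a c d q).aestronglyMeasurable measurableSet_Ioi) ?_
  filter_upwards [ae_restrict_mem measurableSet_Ioi] with t ht
  have ht1 : (1:ℝ) < t := ht
  have ht0 : (0:ℝ) < t := lt_trans one_pos ht1
  rw [Real.norm_eq_abs, abs_of_nonneg (by positivity)]
  rw [sq_form d ha hc.le ht0]
  have hF : a ^ 2 * t - 2 * a ^ 2 * t₀ ≤ a ^ 2 * (t - t₀) ^ 2 / t := by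
    rw [le_div_iff₀ ht0]
    nlinarith [sq_nonneg (a * t₀)]
  have : Real.exp (-(a ^ 2 * (t - t₀) ^ 2 / t))
      ≤ Real.exp (2 * a ^ 2 * t₀) * Real.exp (-(a ^ 2) * t) := by
    rw [← Real.exp_add]
    apply Real.exp_le_exp.mpr
    linarith
  calc t ^ q * Real.exp (-(a ^ 2 * (t - t₀) ^ 2 / t))
      ≤ t ^ q * (Real.exp (2 * a ^ 2 * t₀) * Real.exp (-(a ^ 2) * t)) := by
        apply mul_le_mul_of_nonneg_left this (by positivity)
    _ = Real.exp (2 * a ^ 2 * t₀) * (t ^ q * Real.exp (-(a ^ 2) * t)) := by ring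

lemma lower_main {a c : ℝ} (d : ℝ) {j : ℕ} (ha : 0 < a) (hc : 0 < c) (hj : 1 ≤ j)
    (ht₀ : 1 ≤ d * Real.sqrt c / a) :
    Real.exp (-a ^ 2) * (2:ℝ) ^ (-(1/2:ℝ)) * (d * Real.sqrt c / a) ^ ((j:ℝ) - 1)
      ≤ ∫ t in Set.Ioi (1:ℝ),
          t ^ ((j : ℝ) - 3/2) * Real.exp (-(a * Real.sqrt t - d * Real.sqrt (c / t)) ^ 2) := by
  set t₀ : ℝ := d * Real.sqrt c / a with ht₀def
  have ht₀pos : 0 < t₀ := lt_of_lt_of_le one_pos ht₀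
  have hs : (0:ℝ) < Real.sqrt t₀ := Real.sqrt_pos.mpr ht₀pos
  have hst : Real.sqrt t₀ ≤ t₀ := by
    nlinarith [Real.sq_sqrt ht₀pos.le, Real.sqrt_le_sqrt ht₀]
  set g : ℝ → ℝ := fun t =>
    t ^ ((j : ℝ) - 3/2) * Real.exp (-(a * Real.sqrt t - d * Real.sqrt (c / t)) ^ 2) with hg
  have hq : (-1:ℝ) < (j:ℝ) - 3/2 := by
    have : (1:ℝ) ≤ (j:ℝ) := by exact_mod_cast hj
    linarith
  have hint := integ_main d ((j:ℝ) - 3/2) ha hc hq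
  have hgnn : ∀ t : ℝ, 0 < t → 0 ≤ g t := fun t ht => by positivity
  set K : ℝ := Real.exp (-a ^ 2) * (2 * t₀) ^ (-(1/2:ℝ)) * t₀ ^ ((j:ℝ) - 1) with hK
  have hIsub : Set.Ioc t₀ (t₀ + Real.sqrt t₀) ⊆ Set.Ioi (1:ℝ) :=
    fun x hx => lt_of_le_of_lt ht₀ hx.1
  -- pointwise bound on I
  have hpt : ∀ t ∈ Set.Ioc t₀ (t₀ + Real.sqrt t₀), K ≤ g t := by
    intro t ht
    have ht0 : (0:ℝ) < t := lt_trans ht₀pos ht.1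
    have hexp : Real.exp (-a ^ 2) ≤
        Real.exp (-(a * Real.sqrt t - d * Real.sqrt (c / t)) ^ 2) := by
      rw [sq_form d ha hc.le ht0]
      apply Real.exp_le_exp.mpr
      rw [neg_le_neg_iff, div_le_iff₀ ht0]
      have h1 : t - t₀ ≤ Real.sqrt t₀ := by linarith [ht.2]
      have h2 : 0 ≤ t - t₀ := le_of_lt (by linarith [ht.1])
      have h7 : (t - t₀) ^ 2 ≤ t₀ := by nlinarith [Real.sq_sqrt ht₀pos.le]
      nlinarith [mul_le_mul_of_nonneg_left h7 (sq_nonneg a),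
        mul_le_mul_of_nonneg_left ht.1.le (sq_nonneg a)]
    have hsplit : t ^ ((j:ℝ) - 3/2) = t ^ ((j:ℝ) - 1) * t ^ (-(1/2:ℝ)) := by
      rw [← Real.rpow_add ht0]; congr 1; ring
    have h3 : t₀ ^ ((j:ℝ) - 1) ≤ t ^ ((j:ℝ) - 1) := by
      apply Real.rpow_le_rpow ht₀pos.le ht.1.le
      have : (1:ℝ) ≤ (j:ℝ) := by exact_mod_cast hj
      linarith
    have h4 : (2 * t₀) ^ (-(1/2:ℝ)) ≤ t ^ (-(1/2:ℝ)) := by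
      apply Real.rpow_le_rpow_of_nonpos ht0 (by linarith [ht.2]) (by norm_num)
    calc K = t₀ ^ ((j:ℝ) - 1) * (2 * t₀) ^ (-(1/2:ℝ)) * Real.exp (-a ^ 2) := by rw [hK]; ring
      _ ≤ t ^ ((j:ℝ) - 1) * t ^ (-(1/2:ℝ)) *
          Real.exp (-(a * Real.sqrt t - d * Real.sqrt (c / t)) ^ 2) := by
          apply mul_le_mul (mul_le_mul h3 h4 (by positivity) (by positivity)) hexp
            (by positivity) (by positivity)
      _ = g t := by rw [hg]; simp only []; rw [hsplit]
  -- integral over I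
  have hmeas : MeasurableSet (Set.Ioc t₀ (t₀ + Real.sqrt t₀)) := measurableSet_Ioc
  have hIint : IntegrableOn g (Set.Ioc t₀ (t₀ + Real.sqrt t₀)) := hint.mono_set hIsub
  have hvol : (volume (Set.Ioc t₀ (t₀ + Real.sqrt t₀))).toReal = Real.sqrt t₀ := by
    rw [Real.volume_Ioc, ENNReal.toReal_ofReal (by linarith)]
    ring
  have h5 : K * Real.sqrt t₀ ≤ ∫ t in Set.Ioc t₀ (t₀ + Real.sqrt t₀), g t := by
    have := setIntegral_ge_of_const_le_real hmeas (by rw [Real.volume_Ioc]; exact ENNReal.ofReal_ne_top) hpt hIint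
    rwa [measureReal_def, hvol] at this
  have h6 : (∫ t in Set.Ioc t₀ (t₀ + Real.sqrt t₀), g t) ≤ ∫ t in Set.Ioi (1:ℝ), g t := by
    apply setIntegral_mono_set hint
    · filter_upwards [ae_restrict_mem measurableSet_Ioi] with t ht
      exact hgnn t (lt_trans one_pos ht)
    · exact HasSubset.Subset.eventuallyLE hIsub
  have hfinal : Real.exp (-a ^ 2) * (2:ℝ) ^ (-(1/2:ℝ)) * t₀ ^ ((j:ℝ) - 1)
      = K * Real.sqrt t₀ := by
    rw [hK, Real.mul_rpow (by norm_num) ht₀pos.le, Real.sqrt_eq_rpow]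
    rw [show Real.exp (-a ^ 2) * ((2:ℝ) ^ (-(1/2:ℝ)) * t₀ ^ (-(1/2:ℝ))) * t₀ ^ ((j:ℝ) - 1) *
        t₀ ^ ((1:ℝ)/2) = Real.exp (-a ^ 2) * (2:ℝ) ^ (-(1/2:ℝ)) * t₀ ^ ((j:ℝ) - 1) *
        (t₀ ^ (-(1/2:ℝ)) * t₀ ^ ((1:ℝ)/2)) from by ring]
    rw [← Real.rpow_add ht₀pos]
    norm_num
  rw [hfinal]
  exact le_trans h5 h6

lemma upper_main {a c : ℝ} (d : ℝ) {j : ℕ} (ha : 0 < a) (hc : 0 < c) (hj : 1 ≤ j)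
    (ht₀ : 1 ≤ d * Real.sqrt c / a) :
    (∫ t in Set.Ioi (1:ℝ),
        t ^ ((j : ℝ) - 3/2) * Real.exp (-(a * Real.sqrt t - d * Real.sqrt (c / t)) ^ 2))
      ≤ (4 * (d * Real.sqrt c / a)) ^ ((j:ℝ) - 1) * (2 * Real.sqrt (π / a ^ 2))
        + ∫ t in Set.Ioi (0:ℝ), t ^ (j:ℝ) * Real.exp (-(a ^ 2 / 2) * t) := by
  set t₀ : ℝ := d * Real.sqrt c / a with ht₀def
  set T : ℝ := 4 * t₀ with hTdef
  set s₀ : ℝ := Real.sqrt t₀ with hs₀def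
  have hT1 : (1:ℝ) ≤ T := by simp only [hTdef]; linarith
  have hT0 : (0:ℝ) < T := lt_of_lt_of_le one_pos hT1
  have hj1 : (1:ℝ) ≤ (j:ℝ) := by exact_mod_cast hj
  have hq : (-1:ℝ) < (j:ℝ) - 3/2 := by linarith
  have hint := integ_main (a := a) (c := c) d ((j:ℝ) - 3/2) ha hc hq
  set g : ℝ → ℝ := fun t =>
    t ^ ((j : ℝ) - 3/2) * Real.exp (-(a * Real.sqrt t - d * Real.sqrt (c / t)) ^ 2) with hg
  set h : ℝ → ℝ := fun t =>
    t ^ (-(1/2:ℝ)) * Real.exp (-(a ^ 2) * (Real.sqrt t - s₀) ^ 2) with hh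
  -- split the integral
  have hsplit : (∫ t in Set.Ioi (1:ℝ), g t)
      = (∫ t in Set.Ioc (1:ℝ) T, g t) + ∫ t in Set.Ioi T, g t := by
    rw [← setIntegral_union (Set.Ioc_disjoint_Ioi le_rfl) measurableSet_Ioi
      (hint.mono_set Set.Ioc_subset_Ioi_self) (hint.mono_set (Set.Ioi_subset_Ioi hT1)),
      Set.Ioc_union_Ioi_eq_Ioi hT1]
  -- integrability of h on Ioc 1 T
  have hconth : ContinuousOn h (Set.Icc (1:ℝ) T) := by
    apply ContinuousOn.mul
    · exact fun t ht =>
        (Real.continuousAt_rpow_const t (-(1/2:ℝ))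
          (Or.inl (ne_of_gt (lt_of_lt_of_le one_pos ht.1)))).continuousWithinAt
    · fun_prop
  have hinth : IntegrableOn h (Set.Ioc (1:ℝ) T) :=
    (hconth.integrableOn_compact isCompact_Icc).mono_set Set.Ioc_subset_Icc_self
  -- pointwise middle bound
  have hmid : (∫ t in Set.Ioc (1:ℝ) T, g t)
      ≤ ∫ t in Set.Ioc (1:ℝ) T, T ^ ((j:ℝ) - 1) * h t := by
    apply setIntegral_mono_on (hint.mono_set Set.Ioc_subset_Ioi_self)
      (hinth.const_mul _) measurableSet_Ioc
    intro t ht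
    have ht0 : (0:ℝ) < t := lt_trans one_pos ht.1
    have hssq : Real.sqrt t * Real.sqrt t = t := Real.mul_self_sqrt ht0.le
    have hs0sq : s₀ * s₀ = t₀ := Real.mul_self_sqrt (by positivity)
    have hFexp : Real.exp (-(a * Real.sqrt t - d * Real.sqrt (c / t)) ^ 2)
        ≤ Real.exp (-(a ^ 2) * (Real.sqrt t - s₀) ^ 2) := by
      rw [sq_form d ha hc.le ht0]
      apply Real.exp_le_exp.mpr
      rw [neg_mul, neg_le_neg_iff, le_div_iff₀ ht0]
      have e1 : (t - t₀) ^ 2 = (Real.sqrt t - s₀) ^ 2 * t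
          + (Real.sqrt t - s₀) ^ 2 * (2 * Real.sqrt t * s₀ + s₀ ^ 2) := by
        linear_combination
          (-2 * (Real.sqrt t * Real.sqrt t - s₀ * s₀)
            + ((Real.sqrt t * Real.sqrt t - t) - (s₀ * s₀ - t₀))
            + (Real.sqrt t - s₀) ^ 2) * hssq
          + (2 * (Real.sqrt t * Real.sqrt t - s₀ * s₀)
            - ((Real.sqrt t * Real.sqrt t - t) - (s₀ * s₀ - t₀))) * hs0sq
      have e2 : 0 ≤ (Real.sqrt t - s₀) ^ 2 * (2 * Real.sqrt t * s₀ + s₀ ^ 2) := by positivity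
      calc a ^ 2 * (Real.sqrt t - s₀) ^ 2 * t = a ^ 2 * ((Real.sqrt t - s₀) ^ 2 * t) := by ring
        _ ≤ a ^ 2 * ((Real.sqrt t - s₀) ^ 2 * t
            + (Real.sqrt t - s₀) ^ 2 * (2 * Real.sqrt t * s₀ + s₀ ^ 2)) := by
            nlinarith [mul_nonneg (sq_nonneg a) e2]
        _ = a ^ 2 * (t - t₀) ^ 2 := by rw [← e1]
    have hsplitpow : t ^ ((j:ℝ) - 3/2) = t ^ ((j:ℝ) - 1) * t ^ (-(1/2:ℝ)) := by
      rw [← Real.rpow_add ht0]; congr 1; ring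
    have h3 : t ^ ((j:ℝ) - 1) ≤ T ^ ((j:ℝ) - 1) :=
      Real.rpow_le_rpow ht0.le ht.2 (by linarith)
    calc g t = t ^ ((j:ℝ) - 1) * (t ^ (-(1/2:ℝ))
          * Real.exp (-(a * Real.sqrt t - d * Real.sqrt (c / t)) ^ 2)) := by
          rw [hg]; simp only []; rw [hsplitpow]; ring
      _ ≤ T ^ ((j:ℝ) - 1) * (t ^ (-(1/2:ℝ)) * Real.exp (-(a ^ 2) * (Real.sqrt t - s₀) ^ 2)) := by
          apply mul_le_mul h3 (mul_le_mul_of_nonneg_left hFexp (by positivity))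
            (by positivity) (by positivity)
      _ = T ^ ((j:ℝ) - 1) * h t := rfl
  -- substitution
  have hsubst : (∫ x in (1:ℝ)..T, h x)
      = ∫ u in (1:ℝ)..Real.sqrt T, 2 * Real.exp (-(a ^ 2) * (u - s₀) ^ 2) := by
    have hderiv : ∀ x ∈ Set.uIcc (1:ℝ) T,
        HasDerivAt Real.sqrt (1 / (2 * Real.sqrt x)) x := by
      intro x hx
      rw [Set.uIcc_of_le hT1] at hx
      exact Real.hasDerivAt_sqrt (ne_of_gt (lt_of_lt_of_le one_pos hx.1))
    have hcont' : ContinuousOn (fun x => 1 / (2 * Real.sqrt x)) (Set.uIcc (1:ℝ) T) := by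
      apply continuousOn_const.div ((continuous_const.mul Real.continuous_sqrt).continuousOn)
      intro x hx
      rw [Set.uIcc_of_le hT1] at hx
      have : (0:ℝ) < Real.sqrt x := Real.sqrt_pos.mpr (lt_of_lt_of_le one_pos hx.1)
      exact mul_ne_zero two_ne_zero this.ne'
    have hgc : Continuous (fun u : ℝ => 2 * Real.exp (-(a ^ 2) * (u - s₀) ^ 2)) := by
      fun_prop
    have key := intervalIntegral.integral_comp_smul_deriv hderiv hcont' hgc
    rw [Real.sqrt_one] at key
    rw [← key]
    apply intervalIntegral.integral_congr
    intro x hx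
    rw [Set.uIcc_of_le hT1] at hx
    have hx0 : (0:ℝ) < x := lt_of_lt_of_le one_pos hx.1
    have hsx : (0:ℝ) < Real.sqrt x := Real.sqrt_pos.mpr hx0
    show h x = (1 / (2 * Real.sqrt x)) • (2 * Real.exp (-(a ^ 2) * (Real.sqrt x - s₀) ^ 2))
    rw [hh]
    simp only [smul_eq_mul]
    rw [Real.rpow_neg hx0.le, ← Real.sqrt_eq_rpow]
    field_simp
  -- gaussian bound
  have hgauss : (∫ u in (1:ℝ)..Real.sqrt T, 2 * Real.exp (-(a ^ 2) * (u - s₀) ^ 2))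
      ≤ 2 * Real.sqrt (π / a ^ 2) := by
    have ha2 : (0:ℝ) < a ^ 2 := by positivity
    have hintg : Integrable (fun u : ℝ => 2 * Real.exp (-(a ^ 2) * (u - s₀) ^ 2)) :=
      ((integrable_exp_neg_mul_sq ha2).comp_sub_right s₀).const_mul 2
    have h1T : (1:ℝ) ≤ Real.sqrt T := by
      rw [show (1:ℝ) = Real.sqrt 1 from Real.sqrt_one.symm]
      exact Real.sqrt_le_sqrt hT1
    rw [intervalIntegral.integral_of_le h1T]
    calc (∫ u in Set.Ioc (1:ℝ) (Real.sqrt T), 2 * Real.exp (-(a ^ 2) * (u - s₀) ^ 2))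
        ≤ ∫ u : ℝ, 2 * Real.exp (-(a ^ 2) * (u - s₀) ^ 2) :=
          setIntegral_le_integral hintg (Filter.Eventually.of_forall fun u => by positivity)
      _ = 2 * Real.sqrt (π / a ^ 2) := by
          rw [MeasureTheory.integral_const_mul]
          rw [show (fun u : ℝ => Real.exp (-(a ^ 2) * (u - s₀) ^ 2))
              = fun u : ℝ => (fun v : ℝ => Real.exp (-(a ^ 2) * v ^ 2)) (u - s₀) from rfl]
          rw [MeasureTheory.integral_sub_right_eq_self (fun v : ℝ => Real.exp (-(a ^ 2) * v ^ 2)) s₀]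
          rw [integral_gaussian]
  -- tail
  have hbig : IntegrableOn (fun t : ℝ => t ^ (j:ℝ) * Real.exp (-(a ^ 2 / 2) * t))
      (Set.Ioi (0:ℝ)) := by
    have h0 := integrableOn_rpow_mul_exp_neg_mul_rpow
      (show (-1:ℝ) < (j:ℝ) by linarith) zero_lt_one (show (0:ℝ) < a ^ 2 / 2 by positivity)
    simpa [Real.rpow_one] using h0
  have htail : (∫ t in Set.Ioi T, g t)
      ≤ ∫ t in Set.Ioi (0:ℝ), t ^ (j:ℝ) * Real.exp (-(a ^ 2 / 2) * t) := by
    have step1 : (∫ t in Set.Ioi T, g t)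
        ≤ ∫ t in Set.Ioi T, t ^ (j:ℝ) * Real.exp (-(a ^ 2 / 2) * t) := by
      apply setIntegral_mono_on (hint.mono_set (Set.Ioi_subset_Ioi hT1))
        (hbig.mono_set (Set.Ioi_subset_Ioi hT0.le)) measurableSet_Ioi
      intro t ht
      have htT : T < t := ht
      have ht1 : (1:ℝ) < t := lt_of_le_of_lt hT1 htT
      have ht0 : (0:ℝ) < t := lt_trans one_pos ht1
      have h1 : t ^ ((j:ℝ) - 3/2) ≤ t ^ (j:ℝ) :=
        Real.rpow_le_rpow_of_exponent_le ht1.le (by linarith)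
      have h2 : Real.exp (-(a * Real.sqrt t - d * Real.sqrt (c / t)) ^ 2)
          ≤ Real.exp (-(a ^ 2 / 2) * t) := by
        rw [sq_form d ha hc.le ht0]
        apply Real.exp_le_exp.mpr
        rw [neg_mul, neg_le_neg_iff, le_div_iff₀ ht0]
        have h8 : 3 * t / 4 ≤ t - t₀ := by
          have : 4 * t₀ < t := htT
          linarith
        have h9 : (3 * t / 4) ^ 2 ≤ (t - t₀) ^ 2 := by nlinarith
        nlinarith [mul_le_mul_of_nonneg_left h9 (sq_nonneg a)]
      exact mul_le_mul h1 h2 (by positivity) (by positivity)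
    have step2 : (∫ t in Set.Ioi T, t ^ (j:ℝ) * Real.exp (-(a ^ 2 / 2) * t))
        ≤ ∫ t in Set.Ioi (0:ℝ), t ^ (j:ℝ) * Real.exp (-(a ^ 2 / 2) * t) := by
      apply setIntegral_mono_set hbig
      · filter_upwards [ae_restrict_mem measurableSet_Ioi] with t ht
        have : (0:ℝ) < t := ht
        positivity
      · exact HasSubset.Subset.eventuallyLE (Set.Ioi_subset_Ioi hT0.le)
    exact le_trans step1 step2
  -- combine
  rw [hsplit]
  apply add_le_add _ htail
  calc (∫ t in Set.Ioc (1:ℝ) T, g t)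
      ≤ ∫ t in Set.Ioc (1:ℝ) T, T ^ ((j:ℝ) - 1) * h t := hmid
    _ = T ^ ((j:ℝ) - 1) * ∫ t in Set.Ioc (1:ℝ) T, h t := MeasureTheory.integral_const_mul _ _
    _ = T ^ ((j:ℝ) - 1) * ∫ x in (1:ℝ)..T, h x := by
        rw [intervalIntegral.integral_of_le hT1]
    _ = T ^ ((j:ℝ) - 1) * ∫ u in (1:ℝ)..Real.sqrt T, 2 * Real.exp (-(a ^ 2) * (u - s₀) ^ 2) := by
        rw [hsubst]
    _ ≤ T ^ ((j:ℝ) - 1) * (2 * Real.sqrt (π / a ^ 2)) :=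
        mul_le_mul_of_nonneg_left hgauss (by positivity)

/-- For `a, c > 0` and an integer `j ≥ 1`, the integral
`J(d) = ∫₁^∞ t^{j−3/2} · exp(−(a√t − d√(c/t))²) dt` satisfies `J(d) ≍ d^{j−1}` as `d → ∞`. -/
theorem laplace_integral_asymptotics (a c : ℝ) (ha : 0 < a) (hc : 0 < c)
    (j : ℕ) (hj : 1 ≤ j) :
    ∃ C₁ C₂ d₀ : ℝ, 0 < C₁ ∧ 0 < C₂ ∧ 0 < d₀ ∧ ∀ d : ℝ, d₀ ≤ d →
      C₁ * d ^ (j - 1) ≤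
        (∫ t in Set.Ioi (1 : ℝ),
          t ^ ((j : ℝ) - 3/2) * Real.exp (-(a * Real.sqrt t - d * Real.sqrt (c / t)) ^ 2)) ∧
      (∫ t in Set.Ioi (1 : ℝ),
          t ^ ((j : ℝ) - 3/2) * Real.exp (-(a * Real.sqrt t - d * Real.sqrt (c / t)) ^ 2)) ≤
        C₂ * d ^ (j - 1) := by
  have hsc : (0:ℝ) < Real.sqrt c := Real.sqrt_pos.mpr hc
  set K₃ : ℝ := ∫ t in Set.Ioi (0:ℝ), t ^ (j:ℝ) * Real.exp (-(a ^ 2 / 2) * t) with hK₃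
  have hK₃nn : 0 ≤ K₃ := by
    apply setIntegral_nonneg measurableSet_Ioi
    intro t ht
    have : (0:ℝ) < t := ht
    positivity
  refine ⟨Real.exp (-a ^ 2) * (2:ℝ) ^ (-(1/2:ℝ)) * (Real.sqrt c / a) ^ (j - 1),
    (4 * Real.sqrt c / a) ^ (j - 1) * (2 * Real.sqrt (π / a ^ 2)) + K₃,
    1 + a / Real.sqrt c, ?_, ?_, ?_, ?_⟩
  · positivity
  · have h1 : 0 < (4 * Real.sqrt c / a) ^ (j - 1) * (2 * Real.sqrt (π / a ^ 2)) := by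
      positivity
    linarith
  · positivity
  intro d hd
  have hd1 : (1:ℝ) ≤ d := le_trans (by have := div_pos ha hsc; linarith) hd
  have ht₀ : (1:ℝ) ≤ d * Real.sqrt c / a := by
    rw [le_div_iff₀ ha]
    have h1 : (1 + a / Real.sqrt c) * Real.sqrt c ≤ d * Real.sqrt c :=
      mul_le_mul_of_nonneg_right hd hsc.le
    have h2 : (1 + a / Real.sqrt c) * Real.sqrt c = Real.sqrt c + a := by
      field_simp
    nlinarith
  have hcast : ((j:ℝ) - 1) = ((j - 1 : ℕ) : ℝ) := by
    push_cast [Nat.cast_sub hj]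
    ring
  have hdpow : (1:ℝ) ≤ d ^ (j - 1) := one_le_pow₀ hd1
  constructor
  · -- lower bound
    have hlow := lower_main d ha hc hj ht₀
    have heq : (d * Real.sqrt c / a) ^ ((j:ℝ) - 1)
        = (Real.sqrt c / a) ^ (j - 1) * d ^ (j - 1) := by
      rw [hcast, Real.rpow_natCast, show d * Real.sqrt c / a = Real.sqrt c / a * d by ring,
        mul_pow]
    rw [heq] at hlow
    calc Real.exp (-a ^ 2) * (2:ℝ) ^ (-(1/2:ℝ)) * (Real.sqrt c / a) ^ (j - 1) * d ^ (j - 1)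
        = Real.exp (-a ^ 2) * (2:ℝ) ^ (-(1/2:ℝ))
          * ((Real.sqrt c / a) ^ (j - 1) * d ^ (j - 1)) := by ring
      _ ≤ _ := hlow
  · -- upper bound
    have hup := upper_main d ha hc hj ht₀
    have heq : (4 * (d * Real.sqrt c / a)) ^ ((j:ℝ) - 1)
        = (4 * Real.sqrt c / a) ^ (j - 1) * d ^ (j - 1) := by
      rw [hcast, Real.rpow_natCast,
        show 4 * (d * Real.sqrt c / a) = 4 * Real.sqrt c / a * d by ring, mul_pow]
    rw [heq] at hup
    have hmain : (4 * Real.sqrt c / a) ^ (j - 1) * d ^ (j - 1) * (2 * Real.sqrt (π / a ^ 2)) + K₃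
        ≤ ((4 * Real.sqrt c / a) ^ (j - 1) * (2 * Real.sqrt (π / a ^ 2)) + K₃) * d ^ (j - 1) := by
      have h1 : K₃ ≤ K₃ * d ^ (j - 1) := le_mul_of_one_le_right hK₃nn hdpow
      nlinarith
    exact le_trans hup hmain
end

section
/- Let σ > 0, set λ₁ := π/(2σ), and let K(s,t) := K_t(s) be as defined in the context. Suppose δ ∈ (0, σ), ε ∈ (0, λ₁), ℓ ∈ {0, 1}, and k ≥ 1 is an integer. Let O denote the operator acting in the s-variable by (O g)(s) = s · g'(s), and O^k its k-th iterate. Then there exists a constant C > 0 such that |∂_t^ℓ (O^k K_t)(s)| ≤ C · min(|s|, e^{(ε−λ₁)|s|}) for every (s,t) ∈ S_δ. -/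
open Real

/-- The Poisson-type kernel `K_t(s)` for the slice `N × (0, 2σ)`:
`K_t(s) = (2π/σ) · sin(πt/(2σ)) cosh(πs/(2σ)) / (cosh(πs/σ) − cos(πt/σ))`. -/
noncomputable def sliceKernel (σ t s : ℝ) : ℝ :=
  (2 * π / σ) * (Real.sin (π * t / (2 * σ)) * Real.cosh (π * s / (2 * σ)) /
    (Real.cosh (π * s / σ) - Real.cos (π * t / σ)))

/-- The operator `O` acting on functions of the variable `s` by `(O g)(s) = s · g'(s)`. -/
noncomputable def Oop : (ℝ → ℝ) → (ℝ → ℝ) := fun g s => s * deriv g s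

namespace SliceKernelAux

open Polynomial

noncomputable def Pp : ℕ → Polynomial ℂ
  | 0 => 1
  | (m+1) => (X^2 - 1) * (Pp m).derivative - C ((m:ℂ)+1) * (X * Pp m)

noncomputable def Fm (m : ℕ) (z : ℂ) : ℂ := (Pp m).eval (Complex.cosh z) / Complex.sinh z ^ (m+1)

noncomputable def zz (a s t : ℝ) : ℂ := ((a*s : ℝ) : ℂ) + ((-(a*t) : ℝ) : ℂ) * Complex.I

lemma le_norm_of_sq {b : ℝ} {w : ℂ} (hb : 0 ≤ b) (h : b ^ 2 ≤ ‖w‖ ^ 2) : b ≤ ‖w‖ := by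
  nlinarith [norm_nonneg w]

lemma Pp_natDegree (m : ℕ) : (Pp m).natDegree ≤ m := by
  induction m with
  | zero => simp [Pp]
  | succ m ih =>
    have h1 : ((X^2 - 1 : Polynomial ℂ) * (Pp m).derivative).natDegree ≤ m + 1 := by
      rcases Nat.eq_zero_or_pos m with hm | hm
      · subst hm
        simp [Pp]
      · refine (natDegree_mul_le).trans ?_
        have hX : ((X:Polynomial ℂ)^2 - 1).natDegree ≤ 2 := by compute_degree
        have h2 : (Pp m).derivative.natDegree ≤ m - 1 :=
          (natDegree_derivative_le _).trans (Nat.sub_le_sub_right ih 1)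
        omega
    have h2 : (C ((m:ℂ)+1) * ((X:Polynomial ℂ) * Pp m)).natDegree ≤ m + 1 := by
      refine natDegree_mul_le.trans ?_
      rw [natDegree_C]
      have : ((X:Polynomial ℂ) * Pp m).natDegree ≤ 1 + m :=
        natDegree_mul_le.trans (by rw [natDegree_X]; omega)
      omega
    calc (Pp (m+1)).natDegree ≤ _ := by rw [Pp]; exact natDegree_sub_le _ _
    _ ≤ m + 1 := max_le h1 h2

lemma Fm_hasDerivAt (m : ℕ) {z : ℂ} (hz : Complex.sinh z ≠ 0) :
    HasDerivAt (Fm m) (Fm (m+1) z) z := by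
  have h1 : HasDerivAt (fun z => (Pp m).eval (Complex.cosh z))
      ((Pp m).derivative.eval (Complex.cosh z) * Complex.sinh z) z :=
    ((Pp m).hasDerivAt (Complex.cosh z)).comp z (Complex.hasDerivAt_cosh z)
  have h2 : HasDerivAt (fun z => Complex.sinh z ^ (m+1))
      (((m+1 : ℕ) : ℂ) * Complex.sinh z ^ m * Complex.cosh z) z := by
    have := (Complex.hasDerivAt_sinh z).fun_pow (m+1)
    simpa using this
  have h : HasDerivAt (Fm m) _ z := h1.div h2 (pow_ne_zero _ hz)
  convert h using 1
  have hs : Complex.sinh z ^ 2 = Complex.cosh z ^ 2 - 1 := by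
    have := Complex.cosh_sq_sub_sinh_sq z; linear_combination -this
  show Fm (m+1) z = _
  rw [Fm, Pp]
  field_simp
  ring_nf
  simp only [eval_add, eval_sub, eval_neg, eval_mul, eval_pow, eval_X, eval_C, Nat.cast_add, Nat.cast_one]
  linear_combination (-((Pp m).derivative.eval (Complex.cosh z) * Complex.sinh z ^ (m*2) *
    Complex.sinh z ^ 2)) * hs

lemma poly_bound (p : Polynomial ℂ) (m : ℕ) (hdeg : p.natDegree ≤ m) :
    ∃ B : ℝ, 0 < B ∧ ∀ (w : ℂ) (M : ℝ), 1 ≤ M → ‖w‖ ≤ M → ‖p.eval w‖ ≤ B * M ^ m := by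
  refine ⟨(∑ i ∈ Finset.range (m+1), ‖p.coeff i‖) + 1, by positivity, fun w M hM hw => ?_⟩
  have hMp : (0:ℝ) < M := lt_of_lt_of_le one_pos hM
  rw [eval_eq_sum_range' (Nat.lt_succ_of_le hdeg)]
  calc ‖∑ i ∈ Finset.range (m+1), p.coeff i * w ^ i‖
      ≤ ∑ i ∈ Finset.range (m+1), ‖p.coeff i * w ^ i‖ := norm_sum_le _ _
    _ ≤ ∑ i ∈ Finset.range (m+1), ‖p.coeff i‖ * M ^ m := by
        refine Finset.sum_le_sum fun i hi => ?_
        rw [norm_mul, norm_pow]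
        refine mul_le_mul_of_nonneg_left ?_ (norm_nonneg _)
        calc ‖w‖ ^ i ≤ M ^ i := pow_le_pow_left₀ (norm_nonneg _) hw i
          _ ≤ M ^ m := pow_le_pow_right₀ hM (Nat.lt_succ_iff.mp (Finset.mem_range.mp hi))
    _ = (∑ i ∈ Finset.range (m+1), ‖p.coeff i‖) * M ^ m := by rw [← Finset.sum_mul]
    _ ≤ _ := by nlinarith [pow_pos hMp m, Finset.sum_nonneg (fun i (_ : i ∈ Finset.range (m+1)) => norm_nonneg (p.coeff i))]

lemma normSq_sinh (x y : ℝ) :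
    Complex.normSq (Complex.sinh (x + y * Complex.I)) =
      Real.sinh x ^ 2 * Real.cos y ^ 2 + Real.cosh x ^ 2 * Real.sin y ^ 2 := by
  rw [Complex.sinh_add, Complex.sinh_mul_I, Complex.cosh_mul_I]
  rw [← Complex.ofReal_sinh, ← Complex.ofReal_cosh, ← Complex.ofReal_sin, ← Complex.ofReal_cos]
  have : ((Real.sinh x : ℂ) * (Real.cos y : ℂ) + (Real.cosh x : ℂ) * ((Real.sin y : ℂ) * Complex.I))
      = ((Real.sinh x * Real.cos y : ℝ) : ℂ) + ((Real.cosh x * Real.sin y : ℝ) : ℂ) * Complex.I := by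
    push_cast; ring
  rw [this, Complex.normSq_add_mul_I]
  ring

lemma normSq_cosh (x y : ℝ) :
    Complex.normSq (Complex.cosh (x + y * Complex.I)) =
      Real.cosh x ^ 2 * Real.cos y ^ 2 + Real.sinh x ^ 2 * Real.sin y ^ 2 := by
  rw [Complex.cosh_add, Complex.sinh_mul_I, Complex.cosh_mul_I]
  rw [← Complex.ofReal_sinh, ← Complex.ofReal_cosh, ← Complex.ofReal_sin, ← Complex.ofReal_cos]
  have : ((Real.cosh x : ℂ) * (Real.cos y : ℂ) + (Real.sinh x : ℂ) * ((Real.sin y : ℂ) * Complex.I))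
      = ((Real.cosh x * Real.cos y : ℝ) : ℂ) + ((Real.sinh x * Real.sin y : ℝ) : ℂ) * Complex.I := by
    push_cast; ring
  rw [this, Complex.normSq_add_mul_I]
  ring

lemma norm_sq_sinh' (x y : ℝ) :
    ‖Complex.sinh (x + y * Complex.I)‖ ^ 2 = Real.sinh x ^ 2 + Real.sin y ^ 2 := by
  rw [Complex.sq_norm, normSq_sinh]
  nlinarith [Real.sin_sq_add_cos_sq y, Real.cosh_sq_sub_sinh_sq x]

lemma norm_cosh_le (x y : ℝ) : ‖Complex.cosh (x + y * Complex.I)‖ ≤ Real.exp |x| := by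
  have h1 : ‖Complex.cosh (x + y * Complex.I)‖ ^ 2 ≤ Real.cosh x ^ 2 := by
    rw [Complex.sq_norm, normSq_cosh]
    nlinarith [Real.sin_sq_add_cos_sq y, Real.cosh_sq_sub_sinh_sq x, sq_nonneg (Real.sin y)]
  have h2 : Real.cosh x ≤ Real.exp |x| := by
    rw [← Real.cosh_abs, Real.cosh_eq]
    have := Real.exp_pos (-|x|)
    have : Real.exp (-|x|) ≤ Real.exp |x| := Real.exp_le_exp.mpr (by simpa using abs_nonneg x)
    linarith
  have h3 : (0:ℝ) < Real.cosh x := Real.cosh_pos x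
  nlinarith [norm_nonneg (Complex.cosh (x + y * Complex.I))]

lemma norm_zz_sq (a s t : ℝ) :
    ‖Complex.sinh (zz a s t)‖ ^ 2 = Real.sinh (a*s) ^ 2 + Real.sin (a*t) ^ 2 := by
  rw [zz, norm_sq_sinh']
  rw [Real.sin_neg]; ring

lemma pow_le_exp_aux (j : ℕ) {e : ℝ} (he : 0 < e) :
    ∃ M, 0 < M ∧ ∀ x, 0 ≤ x → x^j ≤ M * Real.exp (e*x) := by
  rcases Nat.eq_zero_or_pos j with h0 | hj
  · refine ⟨1, one_pos, fun x hx => ?_⟩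
    subst h0
    simpa using Real.one_le_exp (by positivity)
  · refine ⟨((j:ℝ)/e)^j, by positivity, fun x hx => ?_⟩
    have hj' : (0:ℝ) < j := by exact_mod_cast hj
    have h2 : e*x/j ≤ Real.exp (e*x/j) := by
      have := Real.add_one_le_exp (e*x/j); linarith
    have h1 : x ≤ ((j:ℝ)/e) * Real.exp (e*x/j) := by
      calc x = ((j:ℝ)/e) * (e*x/j) := by field_simp
        _ ≤ ((j:ℝ)/e) * Real.exp (e*x/j) :=
            mul_le_mul_of_nonneg_left h2 (by positivity)
    calc x^j ≤ (((j:ℝ)/e) * Real.exp (e*x/j))^j := pow_le_pow_left₀ hx h1 j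
      _ = ((j:ℝ)/e)^j * Real.exp (e*x) := by
          rw [mul_pow, ← Real.exp_nat_mul]
          congr 1
          field_simp

variable {σ δ : ℝ}

lemma sin_at_pos (hσ : 0 < σ) {t : ℝ} (ht : t ∈ Set.Ioc 0 σ) : 0 < Real.sin (π/(2*σ) * t) := by
  apply Real.sin_pos_of_pos_of_lt_pi
  · have := Real.pi_pos
    exact mul_pos (by positivity) ht.1
  · have h1 : π/(2*σ) * t ≤ π/(2*σ) * σ :=
      mul_le_mul_of_nonneg_left ht.2 (by have := Real.pi_pos; positivity)
    have h2 : π/(2*σ) * σ = π/2 := by field_simp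
    have := Real.pi_pos
    nlinarith

lemma sinh_zz_ne (hσ : 0 < σ) {t : ℝ} (ht : t ∈ Set.Ioc 0 σ) (s : ℝ) :
    Complex.sinh (zz (π/(2*σ)) s t) ≠ 0 := by
  intro h
  have h2 := norm_zz_sq (π/(2*σ)) s t
  rw [h] at h2
  simp at h2
  have := sin_at_pos hσ ht
  nlinarith [sq_nonneg (Real.sinh (π/(2*σ)*s))]

lemma sinh_lower (hσ : 0 < σ) (hδ0 : 0 < δ) (hδσ : δ < σ) :
    ∃ c : ℝ, 0 < c ∧ ∀ s t : ℝ, t ∈ Set.Ioc 0 σ → δ^2 ≤ s^2 + t^2 →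
      c * Real.exp (π/(2*σ) * |s|) ≤ ‖Complex.sinh (zz (π/(2*σ)) s t)‖ := by
  have hπ := Real.pi_pos
  have hapos : 0 < π/(2*σ) := by positivity
  set a := π/(2*σ) with ha
  set c₀ : ℝ := min (Real.sinh (a*δ/2)) (Real.sin (a*δ/2)) with hc₀
  have hc₀pos : 0 < c₀ := by
    apply lt_min
    · exact Real.sinh_pos_iff.mpr (by positivity)
    · apply Real.sin_pos_of_pos_of_lt_pi (by positivity)
      have : a * δ / 2 < a * σ / 2 := by nlinarith
      have h2 : a * σ = π/2 := by rw [ha]; field_simp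
      nlinarith
  refine ⟨min (c₀/2) 4⁻¹, by positivity, fun s t ht hst => ?_⟩
  have hnormsq := norm_zz_sq a s t
  have hnn : 0 ≤ ‖Complex.sinh (zz a s t)‖ := norm_nonneg _
  -- lower bound c₀
  have hlow : c₀ ≤ ‖Complex.sinh (zz a s t)‖ := by
    rcases le_or_gt (δ/2) |s| with hs | hs
    · -- sinh part dominates
      have h1 : Real.sinh (a*δ/2) ≤ Real.sinh (a*|s|) := by
        apply Real.sinh_le_sinh.mpr
        nlinarith
      have h2 : Real.sinh (a*|s|) ^ 2 ≤ Real.sinh (a*s) ^2 := by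
        have hh : a*|s| = |a*s| := by rw [abs_mul, abs_of_pos hapos]
        rw [hh, ← Real.abs_sinh, sq_abs]
      have h3 : c₀ ≤ Real.sinh (a*|s|) := le_trans (min_le_left _ _) h1
      apply le_norm_of_sq hc₀pos.le
      have h4 : 0 ≤ Real.sinh (a*|s|) := Real.sinh_nonneg_iff.mpr (by positivity)
      nlinarith [sq_nonneg (Real.sin (a*t))]
    · -- t ≥ δ/2, sin part dominates
      have htl : δ/2 ≤ t := by nlinarith [sq_abs s, abs_nonneg s, ht.1]
      have h1 : Real.sin (a*δ/2) ≤ Real.sin (a*t) := by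
        apply Real.sin_le_sin_of_le_of_le_pi_div_two
        · nlinarith
        · have : a * t ≤ a * σ := by nlinarith [ht.2]
          have h2 : a * σ = π/2 := by rw [ha]; field_simp
          linarith
        · nlinarith
      have h3 : c₀ ≤ Real.sin (a*t) := le_trans (min_le_right _ _) h1
      apply le_norm_of_sq hc₀pos.le
      nlinarith [sq_nonneg (Real.sinh (a*s))]
  -- lower bound sinh(a|s|)
  have hlow2 : Real.sinh (a*|s|) ≤ ‖Complex.sinh (zz a s t)‖ := by
    apply le_norm_of_sq (Real.sinh_nonneg_iff.mpr (by positivity))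
    have h2 : Real.sinh (a*|s|) ^ 2 ≤ Real.sinh (a*s) ^2 := by
      have hh : a*|s| = |a*s| := by rw [abs_mul, abs_of_pos hapos]
      rw [hh, ← Real.abs_sinh, sq_abs]
    nlinarith [sq_nonneg (Real.sin (a*t))]
  rcases le_or_gt (Real.exp (a*|s|)) 2 with he | he
  · have h1 : min (c₀/2) 4⁻¹ ≤ c₀/2 := min_le_left _ _
    have h2 := (Real.exp_pos (a*|s|)).le
    nlinarith
  · have hsinh : Real.exp (a*|s|)/4 ≤ Real.sinh (a*|s|) := by
      rw [Real.sinh_eq]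
      rw [Real.exp_neg]
      have hmul : Real.exp (a*|s|) * (Real.exp (a*|s|))⁻¹ = 1 :=
        mul_inv_cancel₀ (Real.exp_pos _).ne'
      nlinarith [Real.exp_pos (a*|s|)]
    have h1 : min (c₀/2) 4⁻¹ ≤ 4⁻¹ := min_le_right _ _
    have h2 := (Real.exp_pos (a*|s|)).le
    have h3 : min (c₀/2) 4⁻¹ * Real.exp (a*|s|) ≤ 4⁻¹ * Real.exp (a*|s|) :=
      mul_le_mul_of_nonneg_right h1 h2
    linarith

abbrev Term : Type := ℂ × ℕ × ℕ

noncomputable def tval (a : ℝ) (p : Term) (s t : ℝ) : ℝ :=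
  s ^ p.2.1 * (p.1 * Fm p.2.2 (zz a s t)).im

noncomputable def LV (a : ℝ) (L : List Term) (s t : ℝ) : ℝ :=
  (L.map (fun p => tval a p s t)).sum

def OstepT (a : ℝ) (p : Term) : List Term :=
  [((p.2.1 : ℂ) * p.1, p.2.1, p.2.2), ((a:ℂ) * p.1, p.2.1+1, p.2.2+1)]

def TstepT (a : ℝ) (p : Term) : Term := (-Complex.I * (a:ℂ) * p.1, p.2.1, p.2.2+1)

noncomputable def dvalS (a : ℝ) (p : Term) (s t : ℝ) : ℝ :=
  (p.2.1:ℝ) * s^(p.2.1-1) * (p.1 * Fm p.2.2 (zz a s t)).im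
    + s^p.2.1 * (p.1 * ((a:ℂ) * Fm (p.2.2+1) (zz a s t))).im

lemma zz_hasDerivAt_s (a t s : ℝ) : HasDerivAt (fun s' => zz a s' t) ((a:ℂ)) s := by
  have h0 : HasDerivAt (fun s' : ℝ => a * s') a s := by
    simpa using (hasDerivAt_id s).const_mul a
  have h : HasDerivAt (fun s' : ℝ => ((a*s' : ℝ) : ℂ)) ((a:ℂ)) s := by
    simpa [Function.comp_def, Complex.ofReal_mul] using
      Complex.ofRealCLM.hasFDerivAt.comp_hasDerivAt s h0
  simpa [zz] using h.add_const (((-(a*t) : ℝ) : ℂ) * Complex.I)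

lemma zz_hasDerivAt_t (a s t : ℝ) :
    HasDerivAt (fun t' => zz a s t') (-(a:ℂ) * Complex.I) t := by
  have h0 : HasDerivAt (fun t' : ℝ => -(a * t')) (-a) t := by
    simpa using ((hasDerivAt_id t).const_mul a).fun_neg
  have h : HasDerivAt (fun t' : ℝ => ((-(a*t') : ℝ) : ℂ)) ((-a : ℝ):ℂ) t := by
    simpa [Function.comp_def, Complex.ofReal_mul, Complex.ofReal_neg] using
      Complex.ofRealCLM.hasFDerivAt.comp_hasDerivAt t h0
  have h2 := (h.mul_const Complex.I).const_add (((a*s : ℝ) : ℂ))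
  simpa [zz] using h2

lemma Fm_comp_hasDerivAt_s (a t : ℝ) (m : ℕ) {s : ℝ} (hz : Complex.sinh (zz a s t) ≠ 0) :
    HasDerivAt (fun s' => Fm m (zz a s' t)) ((a:ℂ) * Fm (m+1) (zz a s t)) s := by
  have h : HasDerivAt ((Fm m) ∘ (fun s' => zz a s' t)) ((a:ℂ) • (Fm (m+1) (zz a s t))) s :=
    HasDerivAt.scomp_of_eq (𝕜 := ℝ) (𝕜' := ℂ) (hg := Fm_hasDerivAt m hz) (hh := zz_hasDerivAt_s a t s) (hy := rfl)
  simpa [Function.comp_def, smul_eq_mul] using h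

lemma Fm_comp_hasDerivAt_t (a s : ℝ) (m : ℕ) {t : ℝ} (hz : Complex.sinh (zz a s t) ≠ 0) :
    HasDerivAt (fun t' => Fm m (zz a s t')) ((-(a:ℂ) * Complex.I) * Fm (m+1) (zz a s t)) t := by
  have h : HasDerivAt ((Fm m) ∘ (fun t' => zz a s t')) ((-(a:ℂ) * Complex.I) • (Fm (m+1) (zz a s t))) t :=
    HasDerivAt.scomp_of_eq (𝕜 := ℝ) (𝕜' := ℂ) (hg := Fm_hasDerivAt m hz) (hh := zz_hasDerivAt_t a s t) (hy := rfl)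
  simpa [Function.comp_def, smul_eq_mul] using h

lemma tval_hasDerivAt_s (a : ℝ) (p : Term) {s t : ℝ} (hz : Complex.sinh (zz a s t) ≠ 0) :
    HasDerivAt (fun s' => tval a p s' t) (dvalS a p s t) s := by
  obtain ⟨c, j, m⟩ := p
  have h1 := Fm_comp_hasDerivAt_s a t m hz
  have h2 : HasDerivAt (fun s' => (c * Fm m (zz a s' t)).im)
      ((c * ((a:ℂ) * Fm (m+1) (zz a s t))).im) s := by
    have h3 := h1.const_mul c
    simpa [Function.comp_def] using Complex.imCLM.hasFDerivAt.comp_hasDerivAt s h3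
  have h4 := (hasDerivAt_pow j s).mul h2
  simp only [tval, dvalS]
  exact h4

lemma tval_hasDerivAt_t (a : ℝ) (p : Term) {s t : ℝ} (hz : Complex.sinh (zz a s t) ≠ 0) :
    HasDerivAt (fun t' => tval a p s t') (tval a (TstepT a p) s t) t := by
  obtain ⟨c, j, m⟩ := p
  have h1 := Fm_comp_hasDerivAt_t a s m hz
  have h2 : HasDerivAt (fun t' => (c * Fm m (zz a s t')).im)
      ((c * ((-(a:ℂ) * Complex.I) * Fm (m+1) (zz a s t))).im) t := by
    have h3 := h1.const_mul c
    simpa [Function.comp_def] using Complex.imCLM.hasFDerivAt.comp_hasDerivAt t h3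
  have h4 := h2.const_mul ((s:ℝ)^j)
  simp only [tval, TstepT]
  have he : (-Complex.I * (a:ℂ) * c) * Fm (m+1) (zz a s t)
      = c * ((-(a:ℂ) * Complex.I) * Fm (m+1) (zz a s t)) := by ring
  rw [he]
  exact h4

lemma LV_hasDerivAt_s (a : ℝ) (L : List Term) {s t : ℝ}
    (hz : Complex.sinh (zz a s t) ≠ 0) :
    HasDerivAt (fun s' => LV a L s' t) ((L.map (fun p => dvalS a p s t)).sum) s := by
  induction L with
  | nil => simpa [LV] using hasDerivAt_const s (0:ℝ)
  | cons p L ih =>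
    have := (tval_hasDerivAt_s a p hz).fun_add ih
    simpa [LV] using this

lemma LV_hasDerivAt_t (a : ℝ) (L : List Term) {s t : ℝ}
    (hz : Complex.sinh (zz a s t) ≠ 0) :
    HasDerivAt (fun t' => LV a L s t') (LV a (L.map (TstepT a)) s t) t := by
  induction L with
  | nil => simpa [LV] using hasDerivAt_const t (0:ℝ)
  | cons p L ih =>
    have := (tval_hasDerivAt_t a p hz).fun_add ih
    simpa [LV] using this

lemma mul_dvalS (a : ℝ) (p : Term) (s t : ℝ) :
    s * dvalS a p s t = LV a (OstepT a p) s t := by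
  obtain ⟨c, j, m⟩ := p
  have he : c * ((a:ℂ) * Fm (m+1) (zz a s t)) = ((a:ℂ) * c) * Fm (m+1) (zz a s t) := by ring
  rcases Nat.eq_zero_or_pos j with h | h
  · subst h
    simp [dvalS, LV, OstepT, tval, he, pow_one]
  · have hs1 : s * s^(j-1) = s^j := by
      rw [← pow_succ']
      congr 1
      omega
    simp only [dvalS, LV, OstepT, tval, List.map_cons, List.map_nil, List.sum_cons,
      List.sum_nil, add_zero, he]
    have him : ((j:ℂ) * c * Fm m (zz a s t)).im = (j:ℝ) * (c * Fm m (zz a s t)).im := by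
      have hcast : (j:ℂ) * c * Fm m (zz a s t) = ((j:ℝ):ℂ) * (c * Fm m (zz a s t)) := by
        push_cast; ring
      rw [hcast]; simp
    rw [him]
    have hp : s^(j+1) = s * s^j := by rw [pow_succ]; ring
    rw [hp]
    linear_combination ((j:ℝ) * (c * Fm m (zz a s t)).im) * hs1

lemma LV_Ostep (a : ℝ) (L : List Term) (s t : ℝ) :
    LV a (L.flatMap (OstepT a)) s t = s * (L.map (fun p => dvalS a p s t)).sum := by
  induction L with
  | nil => simp [LV]
  | cons p L ih =>
    rw [List.flatMap_cons]
    have : LV a (OstepT a p ++ L.flatMap (OstepT a)) s t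
        = LV a (OstepT a p) s t + LV a (L.flatMap (OstepT a)) s t := by
      simp [LV]
    rw [this, ih, ← mul_dvalS]
    simp [mul_add]

lemma Oop_LV (a : ℝ) (L : List Term) {t : ℝ}
    (hz : ∀ s, Complex.sinh (zz a s t) ≠ 0) :
    Oop (fun s' => LV a L s' t) = fun s => LV a (L.flatMap (OstepT a)) s t := by
  funext s
  show s * deriv (fun s' => LV a L s' t) s = _
  rw [(LV_hasDerivAt_s a L (hz s)).deriv, LV_Ostep]

lemma sinh_comp (x y : ℝ) : Complex.sinh ((x:ℂ) + (y:ℂ)*Complex.I)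
    = ((Real.sinh x * Real.cos y : ℝ):ℂ) + ((Real.cosh x * Real.sin y : ℝ):ℂ)*Complex.I := by
  rw [Complex.sinh_add, Complex.sinh_mul_I, Complex.cosh_mul_I]
  rw [← Complex.ofReal_sinh, ← Complex.ofReal_cosh, ← Complex.ofReal_sin, ← Complex.ofReal_cos]
  push_cast; ring

lemma Fm_zero (z : ℂ) : Fm 0 z = (Complex.sinh z)⁻¹ := by
  simp [Fm, Pp]

lemma Fm0_im (a s t : ℝ) :
    (Fm 0 (zz a s t)).im = Real.cosh (a*s) * Real.sin (a*t) /
      (Real.sinh (a*s)^2 * Real.cos (a*t)^2 + Real.cosh (a*s)^2 * Real.sin (a*t)^2) := by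
  rw [Fm_zero, zz, sinh_comp, Complex.inv_im]
  have h1 : (((Real.sinh (a*s) * Real.cos (-(a*t)) : ℝ):ℂ)
      + ((Real.cosh (a*s) * Real.sin (-(a*t)) : ℝ):ℂ)*Complex.I).im
      = Real.cosh (a*s) * Real.sin (-(a*t)) := by
    simp only [Complex.add_im, Complex.ofReal_im, Complex.mul_im, Complex.ofReal_re,
      Complex.I_im, Complex.I_re, mul_zero, mul_one, zero_add, zero_mul, add_zero]
  have h2 : Complex.normSq (((Real.sinh (a*s) * Real.cos (-(a*t)) : ℝ):ℂ)
      + ((Real.cosh (a*s) * Real.sin (-(a*t)) : ℝ):ℂ)*Complex.I)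
      = (Real.sinh (a*s) * Real.cos (-(a*t)))^2 + (Real.cosh (a*s) * Real.sin (-(a*t)))^2 := by
    exact_mod_cast Complex.normSq_add_mul_I _ _
  rw [h1, h2, Real.cos_neg, Real.sin_neg]
  ring_nf

lemma sliceKernel_eq_base (σ : ℝ) (hσ : 0 < σ) {t : ℝ} (s : ℝ)
    (hsin : Real.sin (π/(2*σ)*t) ≠ 0) :
    sliceKernel σ t s = (π/σ) * (Fm 0 (zz (π/(2*σ)) s t)).im := by
  set a := π/(2*σ) with ha
  have hπ := Real.pi_pos
  rw [Fm0_im, sliceKernel]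
  have e1 : π * t / (2*σ) = a * t := by rw [ha]; ring
  have e2 : π * s / (2*σ) = a * s := by rw [ha]; ring
  have e3 : π * s / σ = 2 * (a * s) := by rw [ha]; field_simp
  have e4 : π * t / σ = 2 * (a * t) := by rw [ha]; field_simp
  rw [e1, e2, e3, e4, Real.cosh_two_mul, Real.cos_two_mul]
  have hpy : Real.sin (a*t)^2 + Real.cos (a*t)^2 = 1 := Real.sin_sq_add_cos_sq _
  have hhy : Real.cosh (a*s)^2 - Real.sinh (a*s)^2 = 1 := Real.cosh_sq_sub_sinh_sq _
  have hD2 : Real.sinh (a*s)^2 * Real.cos (a*t)^2 + Real.cosh (a*s)^2 * Real.sin (a*t)^2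
      = Real.sinh (a*s)^2 + Real.sin (a*t)^2 := by nlinarith
  have hD1 : Real.cosh (a*s)^2 + Real.sinh (a*s)^2 - (2 * Real.cos (a*t)^2 - 1)
      = 2 * (Real.sinh (a*s)^2 + Real.sin (a*t)^2) := by nlinarith
  rw [hD2, hD1]
  have hpos : 0 < Real.sinh (a*s)^2 + Real.sin (a*t)^2 := by
    have : 0 < Real.sin (a*t)^2 := by positivity
    nlinarith [sq_nonneg (Real.sinh (a*s))]
  field_simp

section Bounds

lemma Fm_bound {σ δ : ℝ} (hσ : 0 < σ) (hδ0 : 0 < δ) (hδσ : δ < σ) (m : ℕ) :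
    ∃ D : ℝ, 0 < D ∧ ∀ s t : ℝ, t ∈ Set.Ioc 0 σ → δ^2 ≤ s^2 + t^2 →
      ‖Fm m (zz (π/(2*σ)) s t)‖ ≤ D * Real.exp (-(π/(2*σ)) * |s|) := by
  have hπ := Real.pi_pos
  have hapos : 0 < π/(2*σ) := by positivity
  set a := π/(2*σ) with ha
  obtain ⟨B, hB, hBb⟩ := poly_bound (Pp m) m (Pp_natDegree m)
  obtain ⟨c₁, hc₁, hcb⟩ := sinh_lower hσ hδ0 hδσ
  refine ⟨B / c₁^(m+1), by positivity, fun s t ht hst => ?_⟩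
  set E := Real.exp (a * |s|) with hE
  have hEpos : 0 < E := Real.exp_pos _
  have hE1 : 1 ≤ E := Real.one_le_exp (by positivity)
  have hcosh : ‖Complex.cosh (zz a s t)‖ ≤ E := by
    have := norm_cosh_le (a*s) (-(a*t))
    have habs : |a*s| = a * |s| := by rw [abs_mul, abs_of_pos hapos]
    rw [zz]
    calc ‖Complex.cosh (((a*s:ℝ):ℂ) + ((-(a*t):ℝ):ℂ) * Complex.I)‖ ≤ Real.exp |a*s| := this
      _ = E := by rw [habs]
  have hnum : ‖(Pp m).eval (Complex.cosh (zz a s t))‖ ≤ B * E^m := hBb _ _ hE1 hcosh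
  have hden : c₁ * E ≤ ‖Complex.sinh (zz a s t)‖ := hcb s t ht hst
  have hdenpos : (0:ℝ) < c₁ * E := by positivity
  have hnd : (c₁*E)^(m+1) ≤ ‖Complex.sinh (zz a s t)‖^(m+1) :=
    pow_le_pow_left₀ hdenpos.le hden _
  have hfm : ‖Fm m (zz a s t)‖ = ‖(Pp m).eval (Complex.cosh (zz a s t))‖
      / ‖Complex.sinh (zz a s t)‖^(m+1) := by
    rw [Fm, norm_div, norm_pow]
  rw [hfm]
  have step1 : ‖(Pp m).eval (Complex.cosh (zz a s t))‖ / ‖Complex.sinh (zz a s t)‖^(m+1)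
      ≤ (B * E^m) / ((c₁*E)^(m+1)) :=
    div_le_div₀ (by positivity) hnum (by positivity) hnd
  refine step1.trans (le_of_eq ?_)
  have hexp : Real.exp (-a * |s|) = E⁻¹ := by
    rw [hE, ← Real.exp_neg]
    congr 1
    ring
  rw [hexp, mul_pow, pow_succ]
  field_simp
  ring

lemma tval_bound {σ δ ε : ℝ} (hσ : 0 < σ) (hδ0 : 0 < δ) (hδσ : δ < σ) (hε : 0 < ε)
    (p : Term) (hp : 1 ≤ p.2.1 ∨ p.1 = 0) :
    ∃ C : ℝ, 0 < C ∧ ∀ s t : ℝ, t ∈ Set.Ioc 0 σ → δ^2 ≤ s^2 + t^2 →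
      |tval (π/(2*σ)) p s t| ≤ C * min |s| (Real.exp ((ε - π/(2*σ)) * |s|)) := by
  have hπ := Real.pi_pos
  have hapos : 0 < π/(2*σ) := by positivity
  set a := π/(2*σ) with ha
  obtain ⟨c, j, m⟩ := p
  rcases hp with hj | hc
  swap
  · refine ⟨1, one_pos, fun s t ht hst => ?_⟩
    simp only at hc
    subst hc
    have : tval a ((0:ℂ), j, m) s t = 0 := by simp [tval]
    rw [this]
    simp only [abs_zero, one_mul]
    exact le_min (abs_nonneg _) (Real.exp_pos _).le
  simp only at hj
  obtain ⟨D, hD, hDb⟩ := Fm_bound hσ hδ0 hδσ m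
  obtain ⟨M1, hM1, hM1b⟩ := pow_le_exp_aux j hε
  obtain ⟨M2, hM2, hM2b⟩ := pow_le_exp_aux (j-1) hapos
  refine ⟨‖c‖ * D * (max M1 M2) + 1, by positivity, fun s t ht hst => ?_⟩
  have hDs := hDb s t ht hst
  have hbase : |tval a (c, j, m) s t| ≤ |s|^j * (‖c‖ * (D * Real.exp (-a * |s|))) := by
    have h1 : |tval a (c, j, m) s t| ≤ |s|^j * ‖c * Fm m (zz a s t)‖ := by
      rw [tval, abs_mul, abs_pow]
      exact mul_le_mul_of_nonneg_left (Complex.abs_im_le_norm _) (by positivity)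
    refine h1.trans ?_
    rw [norm_mul]
    exact mul_le_mul_of_nonneg_left
      (mul_le_mul_of_nonneg_left hDs (norm_nonneg c)) (by positivity)
  have hCpos : (0:ℝ) ≤ ‖c‖ * D * (max M1 M2) := by positivity
  -- bound by C * |s|
  have hbnd1 : |tval a (c, j, m) s t| ≤ (‖c‖ * D * (max M1 M2) + 1) * |s| := by
    have hsplit : |s|^j = |s| * |s|^(j-1) := by
      conv_lhs => rw [show j = (j-1)+1 by omega]
      rw [pow_succ]
      ring
    have h2 : |s|^(j-1) ≤ M2 * Real.exp (a * |s|) := hM2b _ (abs_nonneg s)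
    have h3 : |s|^j * Real.exp (-a*|s|) ≤ |s| * M2 := by
      rw [hsplit]
      have h4 : |s| * |s|^(j-1) * Real.exp (-a*|s|)
          ≤ |s| * (M2 * Real.exp (a*|s|)) * Real.exp (-a*|s|) := by
        apply mul_le_mul_of_nonneg_right _ (Real.exp_pos _).le
        exact mul_le_mul_of_nonneg_left h2 (abs_nonneg s)
      refine h4.trans (le_of_eq ?_)
      rw [mul_assoc, mul_assoc, ← Real.exp_add]
      simp
    calc |tval a (c, j, m) s t| ≤ |s|^j * (‖c‖ * (D * Real.exp (-a * |s|))) := hbase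
      _ = (‖c‖ * D) * (|s|^j * Real.exp (-a*|s|)) := by ring
      _ ≤ (‖c‖ * D) * (|s| * M2) := mul_le_mul_of_nonneg_left h3 (by positivity)
      _ = (‖c‖ * D * M2) * |s| := by ring
      _ ≤ (‖c‖ * D * (max M1 M2) + 1) * |s| := by
          apply mul_le_mul_of_nonneg_right _ (abs_nonneg s)
          have : M2 ≤ max M1 M2 := le_max_right _ _
          nlinarith
  -- bound by C * exp((ε-a)|s|)
  have hbnd2 : |tval a (c, j, m) s t| ≤ (‖c‖ * D * (max M1 M2) + 1) *
      Real.exp ((ε - a) * |s|) := by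
    have h2 : |s|^j ≤ M1 * Real.exp (ε * |s|) := hM1b _ (abs_nonneg s)
    have h3 : |s|^j * Real.exp (-a*|s|) ≤ M1 * Real.exp ((ε - a) * |s|) := by
      calc |s|^j * Real.exp (-a*|s|) ≤ (M1 * Real.exp (ε*|s|)) * Real.exp (-a*|s|) :=
            mul_le_mul_of_nonneg_right h2 (Real.exp_pos _).le
        _ = M1 * Real.exp ((ε - a) * |s|) := by
            rw [mul_assoc, ← Real.exp_add]
            congr 2
            ring
    calc |tval a (c, j, m) s t| ≤ |s|^j * (‖c‖ * (D * Real.exp (-a * |s|))) := hbase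
      _ = (‖c‖ * D) * (|s|^j * Real.exp (-a*|s|)) := by ring
      _ ≤ (‖c‖ * D) * (M1 * Real.exp ((ε - a) * |s|)) :=
          mul_le_mul_of_nonneg_left h3 (by positivity)
      _ = (‖c‖ * D * M1) * Real.exp ((ε - a) * |s|) := by ring
      _ ≤ _ := by
          apply mul_le_mul_of_nonneg_right _ (Real.exp_pos _).le
          have : M1 ≤ max M1 M2 := le_max_left _ _
          nlinarith
  rcases le_total |s| (Real.exp ((ε - a) * |s|)) with h | h
  · rw [min_eq_left h]; exact hbnd1
  · rw [min_eq_right h]; exact hbnd2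

lemma LV_bound {σ δ ε : ℝ} (hσ : 0 < σ) (hδ0 : 0 < δ) (hδσ : δ < σ) (hε : 0 < ε)
    (L : List Term) (hL : ∀ p ∈ L, 1 ≤ p.2.1 ∨ p.1 = 0) :
    ∃ C : ℝ, 0 < C ∧ ∀ s t : ℝ, t ∈ Set.Ioc 0 σ → δ^2 ≤ s^2 + t^2 →
      |LV (π/(2*σ)) L s t| ≤ C * min |s| (Real.exp ((ε - π/(2*σ)) * |s|)) := by
  induction L with
  | nil =>
    refine ⟨1, one_pos, fun s t ht hst => ?_⟩
    simp only [LV, List.map_nil, List.sum_nil, abs_zero, one_mul]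
    exact le_min (abs_nonneg _) (Real.exp_pos _).le
  | cons p L ih =>
    obtain ⟨C1, hC1, hC1b⟩ := tval_bound hσ hδ0 hδσ hε p (hL p List.mem_cons_self)
    obtain ⟨C2, hC2, hC2b⟩ := ih (fun q hq => hL q (List.mem_cons_of_mem _ hq))
    refine ⟨C1 + C2, by positivity, fun s t ht hst => ?_⟩
    have h1 : LV (π/(2*σ)) (p :: L) s t = tval (π/(2*σ)) p s t + LV (π/(2*σ)) L s t := by
      simp [LV]
    rw [h1]
    calc |tval (π/(2*σ)) p s t + LV (π/(2*σ)) L s t|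
        ≤ |tval (π/(2*σ)) p s t| + |LV (π/(2*σ)) L s t| := abs_add_le _ _
      _ ≤ C1 * min |s| (Real.exp ((ε - π/(2*σ)) * |s|))
          + C2 * min |s| (Real.exp ((ε - π/(2*σ)) * |s|)) :=
          add_le_add (hC1b s t ht hst) (hC2b s t ht hst)
      _ = (C1 + C2) * min |s| (Real.exp ((ε - π/(2*σ)) * |s|)) := by ring

end Bounds

section Rep

lemma sinh_ne_of_sin {a t : ℝ} (hsin : Real.sin (a*t) ≠ 0) (s : ℝ) :
    Complex.sinh (zz a s t) ≠ 0 := by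
  intro h
  have h2 := norm_zz_sq a s t
  rw [h] at h2
  simp at h2
  have h3 : Real.sin (a*t)^2 > 0 := by positivity
  nlinarith [sq_nonneg (Real.sinh (a*s))]

noncomputable def Lk (a c0 : ℝ) : ℕ → List Term
  | 0 => [(((c0 : ℝ) : ℂ), 0, 0)]
  | (k+1) => (Lk a c0 k).flatMap (OstepT a)

lemma rep (σ : ℝ) (hσ : 0 < σ) (k : ℕ) :
    ∀ t : ℝ, Real.sin (π/(2*σ)*t) ≠ 0 → ∀ s : ℝ,
      Oop^[k] (fun s' => sliceKernel σ t s') s = LV (π/(2*σ)) (Lk (π/(2*σ)) (π/σ) k) s t := by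
  induction k with
  | zero =>
    intro t ht s
    rw [Function.iterate_zero, id_eq]
    rw [sliceKernel_eq_base σ hσ s ht]
    simp [Lk, LV, tval, Complex.mul_im]
  | succ k ih =>
    intro t ht s
    rw [Function.iterate_succ_apply']
    have hfe : (Oop^[k] (fun s' => sliceKernel σ t s'))
        = fun s' => LV (π/(2*σ)) (Lk (π/(2*σ)) (π/σ) k) s' t := funext (ih t ht)
    rw [hfe, Oop_LV (π/(2*σ)) _ (sinh_ne_of_sin ht)]
    rfl

lemma good_Ostep (a : ℝ) (L : List Term) :
    ∀ p ∈ L.flatMap (OstepT a), 1 ≤ p.2.1 ∨ p.1 = 0 := by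
  intro p hp
  rw [List.mem_flatMap] at hp
  obtain ⟨q, _, hmem⟩ := hp
  simp only [OstepT, List.mem_cons, List.mem_singleton, List.not_mem_nil, or_false] at hmem
  rcases hmem with h | h
  · rcases Nat.eq_zero_or_pos q.2.1 with h0 | h0
    · right; rw [h]; simp [h0]
    · left; rw [h]; exact h0
  · left; rw [h]
    exact Nat.le_add_left 1 q.2.1

lemma good_Tstep (a : ℝ) (L : List Term) (hL : ∀ p ∈ L, 1 ≤ p.2.1 ∨ p.1 = 0) :
    ∀ p ∈ L.map (TstepT a), 1 ≤ p.2.1 ∨ p.1 = 0 := by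
  intro p hp
  rw [List.mem_map] at hp
  obtain ⟨q, hq, hmem⟩ := hp
  rcases hL q hq with h | h
  · left; rw [← hmem]; exact h
  · right; rw [← hmem]; simp [TstepT, h]

end Rep

end SliceKernelAux


open SliceKernelAux in
/-- For `δ ∈ (0, σ)`, `ε ∈ (0, λ₁)` with `λ₁ = π/(2σ)`, `ℓ ∈ {0,1}` and an integer `k ≥ 1`,
the `k`-th iterate of `O = s∂ₛ` applied to `K_t`, differentiated `ℓ` times in `t`,
satisfies `|∂_t^ℓ (O^k K_t)(s)| ≤ C min(|s|, e^{(ε−λ₁)|s|})` on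
`S_δ = {(s,t) ∈ ℝ × (0,σ] : s² + t² ≥ δ²}`. -/
theorem sliceKernel_iterated_O_deriv_bound (σ : ℝ) (hσ : 0 < σ) (δ ε : ℝ)
    (hδ : δ ∈ Set.Ioo 0 σ) (hε : ε ∈ Set.Ioo 0 (π / (2 * σ)))
    (ℓ k : ℕ) (hℓ : ℓ ≤ 1) (hk : 1 ≤ k) :
    ∃ C : ℝ, 0 < C ∧ ∀ s t : ℝ, t ∈ Set.Ioc 0 σ → δ ^ 2 ≤ s ^ 2 + t ^ 2 →
      |iteratedDeriv ℓ (fun t' => Oop^[k] (fun s' => sliceKernel σ t' s') s) t| ≤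
        C * min |s| (Real.exp ((ε - π / (2 * σ)) * |s|)) := by
  have hπ := Real.pi_pos
  obtain ⟨hδ0, hδσ⟩ := hδ
  obtain ⟨hε0, hεa⟩ := hε
  obtain ⟨k', rfl⟩ : ∃ k', k = k' + 1 := ⟨k - 1, by omega⟩
  set a := π/(2*σ) with ha
  set L : List Term := Lk a (π/σ) (k'+1) with hLdef
  have hgood : ∀ p ∈ L, 1 ≤ p.2.1 ∨ p.1 = 0 := by
    rw [hLdef, Lk]
    exact good_Ostep a _
  have hsin : ∀ {t : ℝ}, t ∈ Set.Ioc 0 σ → Real.sin (a*t) ≠ 0 := by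
    intro t ht
    exact (sin_at_pos hσ ht).ne'
  interval_cases ℓ
  · obtain ⟨C, hC, hCb⟩ := LV_bound hσ hδ0 hδσ hε0 L hgood
    refine ⟨C, hC, fun s t ht hst => ?_⟩
    rw [iteratedDeriv_zero]
    rw [rep σ hσ (k'+1) t (by rw [← ha]; exact hsin ht) s]
    exact hCb s t ht hst
  · obtain ⟨C, hC, hCb⟩ := LV_bound hσ hδ0 hδσ hε0 (L.map (TstepT a))
      (good_Tstep a L hgood)
    refine ⟨C, hC, fun s t ht hst => ?_⟩
    rw [iteratedDeriv_one]
    have hcont : Continuous fun t' : ℝ => Real.sin (π/(2*σ)*t') :=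
      Real.continuous_sin.comp (continuous_const.mul continuous_id)
    have hU : IsOpen {t' : ℝ | Real.sin (π/(2*σ)*t') ≠ 0} :=
      isOpen_compl_singleton.preimage hcont
    have hmem : t ∈ {t' : ℝ | Real.sin (π/(2*σ)*t') ≠ 0} := hsin ht
    have hev : (fun t' => Oop^[k'+1] (fun s' => sliceKernel σ t' s') s)
        =ᶠ[nhds t] (fun t' => LV a L s t') := by
      filter_upwards [hU.mem_nhds hmem] with t' ht' using rep σ hσ (k'+1) t' ht' s
    rw [hev.deriv_eq]
    rw [(LV_hasDerivAt_t a L (sinh_ne_of_sin (hsin ht) s)).deriv]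
    exact hCb s t ht hst
end

section
/- Let σ > 0, set λ₁ := π/(2σ), and let K_t(s) be as defined in the context. Suppose δ ∈ (0, σ), ℓ ∈ {0, 1}, and j ≥ 0 is an integer. Then there exists a constant C > 0 such that |∂_t^ℓ ∂_s^j K_t(s)| ≤ C · e^{−λ₁|s|} for every (s,t) ∈ S_δ. -/
open Real

section Aux
set_option maxHeartbeats 1000000

open Complex Metric Nat

/-- Complexified kernel. -/
noncomputable def gker (σ : ℝ) : ℂ → ℂ :=
  fun w => -((π / σ : ℝ) : ℂ) / Complex.sinh (((π / (2 * σ) : ℝ)) * w)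

lemma sinh_real_add_mul_I (a s t : ℝ) :
    Complex.sinh ((a : ℂ) * (s + t * Complex.I)) =
      ((Real.sinh (a * s) * Real.cos (a * t) : ℝ) : ℂ) +
      ((Real.cosh (a * s) * Real.sin (a * t) : ℝ) : ℂ) * Complex.I := by
  have h : (a : ℂ) * (s + t * Complex.I) = ((a * s : ℝ) : ℂ) + ((a * t : ℝ) : ℂ) * Complex.I := by
    push_cast; ring
  rw [h, Complex.sinh_add, Complex.sinh_mul_I, Complex.cosh_mul_I]
  push_cast; ring

lemma normSq_sinh (a s t : ℝ) :
    Complex.normSq (Complex.sinh ((a : ℂ) * (s + t * Complex.I))) =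
      Real.sinh (a * s) ^ 2 + Real.sin (a * t) ^ 2 := by
  rw [sinh_real_add_mul_I, Complex.normSq_add_mul_I]
  nlinarith [Real.sin_sq_add_cos_sq (a * t), Real.cosh_sq_sub_sinh_sq (a * s)]

lemma slice_eq (σ : ℝ) (hσ : 0 < σ) {t : ℝ} (ht : 0 < t) (ht' : t < 2 * σ) (s : ℝ) :
    sliceKernel σ t s = (gker σ ((s : ℂ) + (t : ℂ) * Complex.I)).im := by
  set a : ℝ := π / (2 * σ) with ha
  have hπ := Real.pi_pos
  have hat : 0 < a * t := by positivity
  have hat' : a * t < π := by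
    rw [ha]; rw [div_mul_eq_mul_div, div_lt_iff₀ (by linarith)]
    nlinarith
  have hsin : 0 < Real.sin (a * t) := Real.sin_pos_of_pos_of_lt_pi hat hat'
  have hD : 0 < Real.sinh (a * s) ^ 2 + Real.sin (a * t) ^ 2 := by positivity
  have h1 : π * t / (2 * σ) = a * t := by rw [ha]; ring
  have h2 : π * s / (2 * σ) = a * s := by rw [ha]; ring
  have h3 : π * s / σ = 2 * (a * s) := by rw [ha]; field_simp
  have h4 : π * t / σ = 2 * (a * t) := by rw [ha]; field_simp
  have hden : Real.cosh (π * s / σ) - Real.cos (π * t / σ) =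
      2 * (Real.sinh (a * s) ^ 2 + Real.sin (a * t) ^ 2) := by
    rw [h3, h4, Real.cosh_two_mul, Real.cos_two_mul]
    nlinarith [Real.sin_sq_add_cos_sq (a * t), Real.cosh_sq_sub_sinh_sq (a * s)]
  have hrhs : (gker σ ((s : ℂ) + (t : ℂ) * Complex.I)).im =
      (π / σ) * (Real.cosh (a * s) * Real.sin (a * t)) /
        (Real.sinh (a * s) ^ 2 + Real.sin (a * t) ^ 2) := by
    rw [gker]
    rw [show (((π / (2 * σ) : ℝ)) : ℂ) * ((s : ℂ) + (t : ℂ) * Complex.I)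
        = ((a : ℂ)) * ((s : ℂ) + (t : ℂ) * Complex.I) by norm_num [ha]]
    rw [Complex.div_im, sinh_real_add_mul_I]
    simp only [Complex.normSq_add_mul_I, Complex.add_re, Complex.ofReal_re, Complex.mul_re,
      Complex.I_re, Complex.ofReal_im, Complex.I_im, Complex.add_im, Complex.mul_im,
      Complex.neg_im, Complex.neg_re]
    rw [show (Real.sinh (a*s)*Real.cos (a*t))^2 + (Real.cosh (a*s)*Real.sin (a*t))^2
        = Real.sinh (a*s)^2 + Real.sin (a*t)^2 from by
      nlinarith [Real.sin_sq_add_cos_sq (a * t), Real.cosh_sq_sub_sinh_sq (a * s)]]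
    field_simp
    ring
  rw [hrhs, sliceKernel, h1, h2, hden]
  field_simp

lemma sin_ge_of_mem {α θ : ℝ} (hα : 0 < α) (hαq : α ≤ π / 2) (h1 : α ≤ θ) (h2 : θ ≤ π - α) :
    Real.sin α ≤ Real.sin θ := by
  rcases le_total θ (π / 2) with h | h
  · exact Real.sin_le_sin_of_le_of_le_pi_div_two (by linarith) h h1
  · rw [← Real.sin_pi_sub θ]
    exact Real.sin_le_sin_of_le_of_le_pi_div_two (by linarith) (by linarith) (by linarith)

lemma sinh_ge_exp {u0 u : ℝ} (h0 : 0 < u0) (h : u0 ≤ u) :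
    (1 - Real.exp (-(2 * u0))) / 2 * Real.exp u ≤ Real.sinh u := by
  rw [Real.sinh_eq]
  have h1 : Real.exp (-u) = Real.exp u * Real.exp (-(2 * u)) := by
    rw [← Real.exp_add]; ring_nf
  have h2 : Real.exp (-(2 * u)) ≤ Real.exp (-(2 * u0)) := Real.exp_le_exp.2 (by linarith)
  nlinarith [Real.exp_pos u]

lemma le_of_sq_le' {b A : ℝ} (h : b ^ 2 ≤ A ^ 2) (hb : 0 ≤ b) (hA : 0 ≤ A) : b ≤ A := by
  nlinarith

lemma sinh_lower (σ : ℝ) (hσ : 0 < σ) (δ : ℝ) (hδ0 : 0 < δ) (hδσ : δ < σ) :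
    ∃ c : ℝ, 0 < c ∧ ∀ w : ℂ, δ / 2 ≤ ‖w‖ → -(δ / 2) ≤ w.im → w.im ≤ σ + δ / 2 →
      c * Real.exp (π / (2 * σ) * |w.re|) ≤ ‖Complex.sinh (((π / (2 * σ) : ℝ)) * w)‖ := by
  have hπ := Real.pi_pos
  set a : ℝ := π / (2 * σ) with ha
  have hapos : 0 < a := by positivity
  have haσ : a * σ = π / 2 := by rw [ha]; field_simp
  have hαpos : 0 < a * (δ / 4) := by positivity
  have hαlt : a * (δ / 4) < π / 8 := by nlinarith
  set c1 : ℝ := (1 - Real.exp (-(2 * (a * (δ / 4))))) / 2 with hc1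
  set c2 : ℝ := Real.sin (a * (δ / 4)) * Real.exp (-(a * (δ / 4))) with hc2
  have hc1pos : 0 < c1 := by
    have : Real.exp (-(2 * (a * (δ / 4)))) < 1 := by
      rw [Real.exp_lt_one_iff]; linarith
    rw [hc1]; linarith
  have hsinα : 0 < Real.sin (a * (δ / 4)) :=
    Real.sin_pos_of_pos_of_lt_pi hαpos (by linarith)
  have hc2pos : 0 < c2 := by positivity
  refine ⟨min c1 c2, lt_min hc1pos hc2pos, fun w hw h1 h2 => ?_⟩
  set x := w.re with hx
  set y := w.im with hy
  have hnn : (0:ℝ) ≤ ‖Complex.sinh ((a : ℂ) * w)‖ := norm_nonneg _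
  have hnorm : ‖Complex.sinh ((a : ℂ) * w)‖ ^ 2 =
      Real.sinh (a * x) ^ 2 + Real.sin (a * y) ^ 2 := by
    rw [Complex.sq_norm]
    rw [show (a : ℂ) * w = (a : ℂ) * ((x : ℂ) + (y : ℂ) * Complex.I) by
      congr 1; exact (Complex.re_add_im w).symm]
    exact normSq_sinh a x y
  have habs2 : (δ / 2) ^ 2 ≤ x ^ 2 + y ^ 2 := by
    have h := Complex.sq_norm w
    rw [Complex.normSq_apply] at h
    nlinarith [norm_nonneg w]
  rcases le_total (δ / 4) |x| with hcase | hcase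
  · -- |x| large
    have hs : c1 * Real.exp (a * |x|) ≤ Real.sinh (a * |x|) :=
      sinh_ge_exp hαpos (by nlinarith [abs_nonneg x])
    have hsabs : |Real.sinh (a * x)| = Real.sinh (a * |x|) := by
      rw [Real.abs_sinh, abs_mul, abs_of_pos hapos]
    have hle : Real.sinh (a * |x|) ≤ ‖Complex.sinh ((a : ℂ) * w)‖ := by
      apply le_of_sq_le' _ _ hnn
      · rw [hnorm, ← hsabs]
        nlinarith [sq_nonneg (Real.sin (a * y)), _root_.sq_abs (Real.sinh (a * x))]
      · rw [← hsabs]; exact abs_nonneg _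
    calc min c1 c2 * Real.exp (a * |x|) ≤ c1 * Real.exp (a * |x|) := by
          apply mul_le_mul_of_nonneg_right (min_le_left _ _) (Real.exp_pos _).le
      _ ≤ Real.sinh (a * |x|) := hs
      _ ≤ _ := hle
  · -- |x| small, |y| bounded below
    have hy4 : δ / 4 ≤ |y| := by
      have hx2 : x ^ 2 ≤ (δ/4) ^ 2 := by
        rw [← _root_.sq_abs x]; exact pow_le_pow_left₀ (abs_nonneg x) hcase 2
      have hy2 : (δ/4) ^ 2 ≤ y ^ 2 := by nlinarith
      exact le_of_sq_le' (by nlinarith [_root_.sq_abs y]) (by positivity) (abs_nonneg y)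
    have hsiny : Real.sin (a * (δ / 4)) ≤ |Real.sin (a * y)| := by
      rcases le_total 0 y with hy0 | hy0
      · have hys : Real.sin (a * (δ/4)) ≤ Real.sin (a * y) := by
          apply sin_ge_of_mem hαpos (by linarith)
          · nlinarith [_root_.abs_of_nonneg hy0]
          · nlinarith [_root_.abs_of_nonneg hy0]
        exact hys.trans (le_abs_self _)
      · have hay : a * (δ/4) ≤ a * (-y) := by nlinarith [_root_.abs_of_nonpos hy0]
        have hay2 : a * (-y) ≤ π / 2 := by nlinarith [_root_.abs_of_nonpos hy0]
        have hys : Real.sin (a * (δ/4)) ≤ Real.sin (a * (-y)) :=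
          Real.sin_le_sin_of_le_of_le_pi_div_two (by linarith) hay2 hay
        rw [show a * (-y) = -(a*y) by ring, Real.sin_neg] at hys
        exact hys.trans (neg_le_abs _)
    have hexp : Real.exp (a * |x|) ≤ Real.exp (a * (δ/4)) :=
      Real.exp_le_exp.2 (by nlinarith)
    have hc2e : c2 * Real.exp (a * |x|) ≤ Real.sin (a * (δ/4)) := by
      calc c2 * Real.exp (a * |x|) ≤ c2 * Real.exp (a * (δ/4)) := by
            apply mul_le_mul_of_nonneg_left hexp hc2pos.le
        _ = Real.sin (a * (δ / 4)) := by
            rw [hc2, mul_assoc, ← Real.exp_add]; simp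
    have hle : |Real.sin (a * y)| ≤ ‖Complex.sinh ((a : ℂ) * w)‖ := by
      apply le_of_sq_le' _ (abs_nonneg _) hnn
      rw [hnorm]
      nlinarith [sq_nonneg (Real.sinh (a * x)), _root_.sq_abs (Real.sin (a * y))]
    calc min c1 c2 * Real.exp (a * |x|) ≤ c2 * Real.exp (a * |x|) := by
          apply mul_le_mul_of_nonneg_right (min_le_right _ _) (Real.exp_pos _).le
      _ ≤ Real.sin (a * (δ/4)) := hc2e
      _ ≤ |Real.sin (a * y)| := hsiny
      _ ≤ _ := hle

lemma cauchy_bound {f : ℂ → ℂ} {z : ℂ} {R C : ℝ} (hR : 0 < R)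
    (hf : DifferentiableOn ℂ f (Metric.closedBall z R))
    (hC : ∀ w ∈ Metric.sphere z R, ‖f w‖ ≤ C) (n : ℕ) :
    ‖iteratedDeriv n f z‖ ≤ (n ! : ℝ) * C / R ^ n := by
  have hC0 : 0 ≤ C := le_trans (norm_nonneg _) (hC (z + R) (by simp [abs_of_pos hR]))
  lift R to NNReal using hR.le with R' hR'
  have hRpos : 0 < R' := by exact_mod_cast hR
  have h := hf.hasFPowerSeriesOnBall hRpos
  set p := cauchyPowerSeries f z R' with hp
  have h1 : (n ! : ℕ) • (p n fun _ => (1:ℂ)) = iteratedFDeriv ℂ n f z fun _ => 1 :=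
    h.factorial_smul 1 n
  have h2 : iteratedDeriv n f z = iteratedFDeriv ℂ n f z fun _ => 1 := by
    rw [iteratedDeriv_eq_iteratedFDeriv]
  have h3 : ‖iteratedDeriv n f z‖ = (n ! : ℝ) * ‖p n fun _ => (1:ℂ)‖ := by
    rw [h2, ← h1, nsmul_eq_mul, norm_mul]
    simp
  have h4 : ‖p n fun _ => (1:ℂ)‖ ≤ ‖p n‖ := by
    have := (p n).le_opNorm fun _ => (1:ℂ)
    simpa using this
  have hint : (∫ θ : ℝ in (0)..2 * π, ‖f (circleMap z R' θ)‖) ≤ 2 * π * C := by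
    have hcont : ContinuousOn (fun θ : ℝ => ‖f (circleMap z R' θ)‖) (Set.uIcc 0 (2*π)) := by
      apply ContinuousOn.norm
      apply hf.continuousOn.comp (continuous_circleMap z R').continuousOn
      intro θ _
      exact circleMap_mem_closedBall z R'.coe_nonneg θ
    have := intervalIntegral.integral_mono_on (by positivity : (0:ℝ) ≤ 2*π)
      (hcont.intervalIntegrable) (intervalIntegrable_const (c := C) (μ := MeasureTheory.volume))
      (fun θ _ => hC _ (circleMap_mem_sphere z R'.coe_nonneg θ))
    refine this.trans (le_of_eq ?_)
    simp [mul_comm]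
  have h5 : ‖p n‖ ≤ C * (R' : ℝ)⁻¹ ^ n := by
    refine (norm_cauchyPowerSeries_le f z R' n).trans ?_
    rw [_root_.abs_of_nonneg R'.coe_nonneg]
    apply mul_le_mul_of_nonneg_right _ (by positivity)
    rw [inv_mul_le_iff₀ (by positivity)]
    linarith [hint]
  rw [h3, div_eq_mul_inv, ← inv_pow]
  calc (n ! : ℝ) * ‖p n fun _ => (1:ℂ)‖ ≤ (n ! : ℝ) * (C * (R':ℝ)⁻¹ ^ n) := by
        apply mul_le_mul_of_nonneg_left (h4.trans h5) (by positivity)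
    _ = (n ! : ℝ) * C * (R':ℝ)⁻¹ ^ n := by ring

lemma analyticOnNhd_iteratedDeriv {f : ℂ → ℂ} {U : Set ℂ}
    (hf : AnalyticOnNhd ℂ f U) (n : ℕ) : AnalyticOnNhd ℂ (iteratedDeriv n f) U := by
  induction n with
  | zero => simpa [iteratedDeriv_zero] using hf
  | succ n ih => rw [iteratedDeriv_succ]; exact ih.deriv

lemma hasDerivAt_im_horiz {f : ℂ → ℂ} {s t : ℝ}
    (hf : DifferentiableAt ℂ f ((s : ℂ) + (t : ℂ) * Complex.I)) :
    HasDerivAt (fun s' : ℝ => (f ((s' : ℂ) + (t : ℂ) * Complex.I)).im)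
      ((deriv f ((s : ℂ) + (t : ℂ) * Complex.I)).im) s := by
  have h1 := hf.hasDerivAt
  have h2 : HasDerivAt (fun w : ℂ => f (w + (t : ℂ) * Complex.I))
      (deriv f ((s : ℂ) + (t : ℂ) * Complex.I)) (s : ℂ) := by
    have := h1.comp (s : ℂ) ((hasDerivAt_id ((s : ℂ))).add_const ((t : ℂ) * Complex.I))
    simpa [Function.comp_def] using this
  have h3 := h2.comp_ofReal
  exact Complex.imCLM.hasFDerivAt.comp_hasDerivAt s h3

lemma hasDerivAt_im_vert {f : ℂ → ℂ} {s t : ℝ}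
    (hf : DifferentiableAt ℂ f ((s : ℂ) + (t : ℂ) * Complex.I)) :
    HasDerivAt (fun t' : ℝ => (f ((s : ℂ) + (t' : ℂ) * Complex.I)).im)
      ((deriv f ((s : ℂ) + (t : ℂ) * Complex.I) * Complex.I).im) t := by
  have h1 := hf.hasDerivAt
  have h2 : HasDerivAt (fun w : ℂ => f ((s : ℂ) + w * Complex.I))
      (deriv f ((s : ℂ) + (t : ℂ) * Complex.I) * Complex.I) (t : ℂ) := by
    have hin : HasDerivAt (fun w : ℂ => (s : ℂ) + w * Complex.I) Complex.I (t : ℂ) := by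
      simpa using ((hasDerivAt_id ((t : ℂ))).mul_const Complex.I).const_add (s : ℂ)
    have := h1.comp (t : ℂ) hin
    simpa [Function.comp_def] using this
  have h3 := h2.comp_ofReal
  exact Complex.imCLM.hasFDerivAt.comp_hasDerivAt t h3

lemma iteratedDeriv_im_line {f : ℂ → ℂ} {U : Set ℂ}
    (hf : AnalyticOnNhd ℂ f U) (t : ℝ)
    (hline : ∀ s : ℝ, (s : ℂ) + (t : ℂ) * Complex.I ∈ U) (n : ℕ) (s : ℝ) :
    iteratedDeriv n (fun s' : ℝ => (f ((s' : ℂ) + (t : ℂ) * Complex.I)).im) s =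
      (iteratedDeriv n f ((s : ℂ) + (t : ℂ) * Complex.I)).im := by
  induction n generalizing s with
  | zero => simp
  | succ n ih =>
    rw [iteratedDeriv_succ, iteratedDeriv_succ]
    have hfun : iteratedDeriv n (fun s' : ℝ => (f ((s' : ℂ) + (t : ℂ) * Complex.I)).im) =
        fun s' : ℝ => (iteratedDeriv n f ((s' : ℂ) + (t : ℂ) * Complex.I)).im := funext ih
    rw [hfun]
    exact (hasDerivAt_im_horiz
      ((analyticOnNhd_iteratedDeriv hf n _ (hline s)).differentiableAt)).deriv

end Aux

set_option maxHeartbeats 1000000 in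
/-- For `δ ∈ (0, σ)`, `ℓ ∈ {0,1}` and a nonnegative integer `j`, the mixed derivatives of
the kernel satisfy `|∂_t^ℓ ∂_s^j K_t(s)| ≤ C e^{−λ₁ |s|}` on
`S_δ = {(s,t) ∈ ℝ × (0,σ] : s² + t² ≥ δ²}`, where `λ₁ = π/(2σ)`. -/
theorem sliceKernel_mixed_deriv_bound (σ : ℝ) (hσ : 0 < σ) (δ : ℝ)
    (hδ : δ ∈ Set.Ioo 0 σ) (ℓ j : ℕ) (hℓ : ℓ ≤ 1) :
    ∃ C : ℝ, 0 < C ∧ ∀ s t : ℝ, t ∈ Set.Ioc 0 σ → δ ^ 2 ≤ s ^ 2 + t ^ 2 →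
      |iteratedDeriv ℓ (fun t' => iteratedDeriv j (fun s' => sliceKernel σ t' s') s) t| ≤
        C * Real.exp (-(π / (2 * σ)) * |s|) := by
  obtain ⟨hδ0, hδσ⟩ := hδ
  have hπ := Real.pi_pos
  set a : ℝ := π / (2 * σ) with ha
  have hapos : 0 < a := by positivity
  obtain ⟨c, hcpos, hcb⟩ := sinh_lower σ hσ δ hδ0 hδσ
  -- the open set of regular points
  set U : Set ℂ := {w : ℂ | Complex.sinh (((π / (2 * σ) : ℝ) : ℂ) * w) ≠ 0} with hU
  have hUopen : IsOpen U := by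
    have hc : Continuous fun w : ℂ => Complex.sinh (((π / (2 * σ) : ℝ) : ℂ) * w) :=
      Complex.continuous_sinh.comp (continuous_const.mul continuous_id)
    exact isOpen_ne_fun hc continuous_const
  have hgdiff : DifferentiableOn ℂ (gker σ) U := by
    intro w hw
    apply DifferentiableAt.differentiableWithinAt
    apply DifferentiableAt.div (differentiableAt_const _)
    · exact (Complex.differentiable_sinh.comp
        ((differentiable_const _).mul differentiable_id)).differentiableAt
    · exact hw
  have hganal : AnalyticOnNhd ℂ (gker σ) U := hgdiff.analyticOnNhd hUopen
  -- horizontal lines at heights in (0, 2σ) are inside U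
  have hline : ∀ t' : ℝ, 0 < t' → t' < 2 * σ → ∀ s' : ℝ,
      ((s' : ℂ) + (t' : ℂ) * Complex.I) ∈ U := by
    intro t' h0 h2 s'
    have hat : 0 < a * t' := by positivity
    have hat' : a * t' < π := by
      rw [ha]; rw [div_mul_eq_mul_div, div_lt_iff₀ (by linarith)]; nlinarith
    have hsin : 0 < Real.sin (a * t') := Real.sin_pos_of_pos_of_lt_pi hat hat'
    have hns : 0 < Complex.normSq (Complex.sinh ((a : ℂ) * ((s' : ℂ) + (t' : ℂ) * Complex.I))) := by
      rw [normSq_sinh]; positivity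
    simp only [hU, Set.mem_setOf_eq]
    intro h0'
    rw [show ((π / (2 * σ) : ℝ) : ℂ) = (a : ℂ) by rw [ha]] at h0'
    rw [h0'] at hns
    simp at hns
  -- pointwise bound for gker on spheres
  set M0 : ℝ := (π / σ) * Real.exp (a * (δ / 2)) / c with hM0
  have hM0pos : 0 < M0 := by positivity
  -- ball facts
  have hball : ∀ s t : ℝ, 0 < t → t ≤ σ → δ ^ 2 ≤ s ^ 2 + t ^ 2 →
      ∀ w ∈ Metric.closedBall ((s : ℂ) + (t : ℂ) * Complex.I) (δ / 2),
      w ∈ U ∧ ‖gker σ w‖ ≤ M0 * Real.exp (-a * |s|) := by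
    intro s t ht htσ hst w hwball
    set z : ℂ := (s : ℂ) + (t : ℂ) * Complex.I with hz
    have hzre : z.re = s := by simp [hz]
    have hzim : z.im = t := by simp [hz]
    have hzabs : δ ≤ ‖z‖ := by
      apply le_of_sq_le' _ hδ0.le (norm_nonneg _)
      rw [Complex.sq_norm, Complex.normSq_apply, hzre, hzim]
      nlinarith
    have hdist : ‖w - z‖ ≤ δ / 2 := by
      rwa [Metric.mem_closedBall, dist_eq_norm] at hwball
    have hre : |w.re - s| ≤ δ / 2 := by
      have := Complex.abs_re_le_norm (w - z)
      rw [Complex.sub_re, hzre] at this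
      linarith
    have him : |w.im - t| ≤ δ / 2 := by
      have := Complex.abs_im_le_norm (w - z)
      rw [Complex.sub_im, hzim] at this
      linarith
    have hwabs : δ / 2 ≤ ‖w‖ := by
      have h1 := norm_add_le (z - w) w
      rw [sub_add_cancel] at h1
      have h2 : ‖z - w‖ = ‖w - z‖ := by
        rw [← neg_sub, norm_neg]
      linarith
    have himlo : -(δ / 2) ≤ w.im := by
      have := (abs_le.1 him).1; linarith
    have himhi : w.im ≤ σ + δ / 2 := by
      have := (abs_le.1 him).2; linarith
    have hsinh := hcb w hwabs himlo himhi
    have hsinhpos : 0 < ‖Complex.sinh (((π / (2 * σ) : ℝ) : ℂ) * w)‖ :=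
      lt_of_lt_of_le (by positivity) hsinh
    have hwU : w ∈ U := by
      simp only [hU, Set.mem_setOf_eq]
      intro h0'
      rw [h0'] at hsinhpos
      simp at hsinhpos
    refine ⟨hwU, ?_⟩
    have hgw : ‖gker σ w‖ = (π / σ) / ‖Complex.sinh (((π / (2 * σ) : ℝ) : ℂ) * w)‖ := by
      rw [gker, norm_div, norm_neg, Complex.norm_real, Real.norm_eq_abs,
        _root_.abs_of_pos (by positivity : (0:ℝ) < π / σ)]
    have h6 : (0:ℝ) < c * Real.exp (a * |w.re|) := by positivity
    have h7 : ‖gker σ w‖ ≤ (π / σ) / (c * Real.exp (a * |w.re|)) := by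
      rw [hgw]
      exact div_le_div_of_nonneg_left (by positivity) h6 hsinh
    refine h7.trans ?_
    rw [div_le_iff₀ h6]
    have hre2 : |s| - δ / 2 ≤ |w.re| := by
      have := abs_sub_abs_le_abs_sub s w.re
      rw [abs_sub_comm] at this
      linarith
    have heq : M0 * Real.exp (-a * |s|) * (c * Real.exp (a * |w.re|)) =
        (π / σ) * Real.exp (a * (δ / 2) + -a * |s| + a * |w.re|) := by
      rw [hM0, Real.exp_add, Real.exp_add]
      field_simp
    rw [heq]
    have hexp1 : (1:ℝ) ≤ Real.exp (a * (δ / 2) + -a * |s| + a * |w.re|) := by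
      apply Real.one_le_exp
      nlinarith
    exact le_mul_of_one_le_right (by positivity) hexp1
  -- eq of the inner iterated derivative with the complex one
  have hEq : ∀ s : ℝ, ∀ t' ∈ Set.Ioo (0:ℝ) (2*σ),
      iteratedDeriv j (fun s' => sliceKernel σ t' s') s =
        (iteratedDeriv j (gker σ) ((s : ℂ) + (t' : ℂ) * Complex.I)).im := by
    intro s t' ht'
    obtain ⟨h0, h2⟩ := ht'
    have hfun : (fun s' => sliceKernel σ t' s') =
        fun s' : ℝ => (gker σ ((s' : ℂ) + (t' : ℂ) * Complex.I)).im :=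
      funext (slice_eq σ hσ h0 h2)
    rw [hfun, iteratedDeriv_im_line hganal t' (hline t' h0 h2) j s]
  -- choose the constant
  set C : ℝ := (Nat.factorial j : ℝ) * M0 / (δ / 2) ^ j + (Nat.factorial (j+1) : ℝ) * M0 / (δ / 2) ^ (j+1) with hC
  have hCpos : 0 < C := by
    have h1 : (0:ℝ) < (Nat.factorial j : ℝ) := by exact_mod_cast Nat.factorial_pos j
    have h2 : (0:ℝ) < (Nat.factorial (j+1) : ℝ) := by exact_mod_cast Nat.factorial_pos (j+1)
    positivity
  refine ⟨C, hCpos, fun s t ht hst => ?_⟩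
  obtain ⟨ht0, htσ⟩ := ht
  set z : ℂ := (s : ℂ) + (t : ℂ) * Complex.I with hz
  have hzself : z ∈ Metric.closedBall z (δ / 2) := Metric.mem_closedBall_self (by positivity)
  have hzU : z ∈ U := (hball s t ht0 htσ hst z hzself).1
  have hsub : Metric.closedBall z (δ / 2) ⊆ U := fun w hw => (hball s t ht0 htσ hst w hw).1
  have hdiffball : DifferentiableOn ℂ (gker σ) (Metric.closedBall z (δ / 2)) :=
    hgdiff.mono hsub
  have hsphere : ∀ w ∈ Metric.sphere z (δ / 2), ‖gker σ w‖ ≤ M0 * Real.exp (-a * |s|) :=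
    fun w hw => (hball s t ht0 htσ hst w (Metric.sphere_subset_closedBall hw)).2
  have hcau : ∀ n : ℕ, ‖iteratedDeriv n (gker σ) z‖ ≤
      (Nat.factorial n : ℝ) * M0 / (δ / 2) ^ n * Real.exp (-a * |s|) := by
    intro n
    have := cauchy_bound (by positivity : (0:ℝ) < δ / 2) hdiffball hsphere n
    calc ‖iteratedDeriv n (gker σ) z‖
        ≤ (Nat.factorial n : ℝ) * (M0 * Real.exp (-a * |s|)) / (δ / 2) ^ n := this
      _ = (Nat.factorial n : ℝ) * M0 / (δ / 2) ^ n * Real.exp (-a * |s|) := by ring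
  have hexps : Real.exp (-a * |s|) > 0 := Real.exp_pos _
  have hBj : (0:ℝ) ≤ (Nat.factorial j : ℝ) * M0 / (δ / 2) ^ j := by positivity
  have hBj1 : (0:ℝ) ≤ (Nat.factorial (j+1) : ℝ) * M0 / (δ / 2) ^ (j+1) := by positivity
  have htIoo : t ∈ Set.Ioo (0:ℝ) (2*σ) := ⟨ht0, by linarith⟩
  interval_cases ℓ
  · -- ℓ = 0
    rw [iteratedDeriv_zero]
    rw [hEq s t htIoo]
    have h1 : |(iteratedDeriv j (gker σ) z).im| ≤ ‖iteratedDeriv j (gker σ) z‖ := by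
      exact Complex.abs_im_le_norm _
    refine h1.trans ((hcau j).trans ?_)
    rw [hC]
    nlinarith
  · -- ℓ = 1
    rw [iteratedDeriv_one]
    have hev : (fun t' => iteratedDeriv j (fun s' => sliceKernel σ t' s') s) =ᶠ[nhds t]
        (fun t' : ℝ => (iteratedDeriv j (gker σ) ((s : ℂ) + (t' : ℂ) * Complex.I)).im) := by
      apply Filter.eventuallyEq_of_mem (Ioo_mem_nhds ht0 (by linarith : t < 2*σ))
      intro t' ht'
      exact hEq s t' ht'
    rw [hev.deriv_eq]
    have hDA : DifferentiableAt ℂ (iteratedDeriv j (gker σ)) z :=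
      (analyticOnNhd_iteratedDeriv hganal j z hzU).differentiableAt
    have hD := hasDerivAt_im_vert (s := s) (t := t) hDA
    rw [← hz] at hD
    rw [hD.deriv]
    have h1 : |(deriv (iteratedDeriv j (gker σ)) z * Complex.I).im| ≤
        ‖deriv (iteratedDeriv j (gker σ)) z * Complex.I‖ := by
      exact Complex.abs_im_le_norm _
    have h2 : ‖deriv (iteratedDeriv j (gker σ)) z * Complex.I‖ =
        ‖iteratedDeriv (j+1) (gker σ) z‖ := by
      rw [norm_mul, Complex.norm_I, mul_one, ← iteratedDeriv_succ]
    rw [h2] at h1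
    refine h1.trans ((hcau (j+1)).trans ?_)
    rw [hC]
    nlinarith
end

section
/- Let σ > 0, t ∈ (0, σ], and φ ∈ (0, π/2). With M_t^ε and M_t as defined in the context, sup_{z : z = 0 or |arg z| ≤ φ} |M_t^ε(z) − M_t(z)| tends to 0 as ε → 0⁺; that is, for every η > 0 there exists ε₀ ∈ (0, t/2) such that for all ε ∈ (0, ε₀) and all z ∈ ℂ with z = 0 or |arg z| ≤ φ, one has |M_t^ε(z) − M_t(z)| ≤ η. -/
open Real Complex

/-- The holomorphic function `M_t^ε(z) = cosh((t−σ)z)/cosh((σ−ε)z)`. -/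
noncomputable def Mfun (σ t ε : ℝ) (z : ℂ) : ℂ :=
  Complex.cosh ((↑t - ↑σ) * z) / Complex.cosh ((↑σ - ↑ε) * z)

lemma abs_cosh_le'' (w : ℂ) : ‖Complex.cosh w‖ ≤ Real.cosh w.re := by
  rw [Complex.cosh, Real.cosh_eq, norm_div, Complex.norm_two]
  gcongr
  calc ‖Complex.exp w + Complex.exp (-w)‖
      ≤ ‖Complex.exp w‖ + ‖Complex.exp (-w)‖ := by
        exact norm_add_le _ _
    _ = Real.exp w.re + Real.exp (-w.re) := by
        rw [Complex.norm_exp, Complex.norm_exp, Complex.neg_re]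

lemma abs_sinh_le'' (w : ℂ) : ‖Complex.sinh w‖ ≤ Real.cosh w.re := by
  rw [Complex.sinh, Real.cosh_eq, norm_div, Complex.norm_two]
  gcongr
  calc ‖Complex.exp w - Complex.exp (-w)‖
      ≤ ‖Complex.exp w‖ + ‖Complex.exp (-w)‖ := by
        simpa using norm_sub_le (Complex.exp w) (Complex.exp (-w))
    _ = Real.exp w.re + Real.exp (-w.re) := by
        rw [Complex.norm_exp, Complex.norm_exp, Complex.neg_re]

lemma sinh_re_le_abs_cosh (w : ℂ) : Real.sinh w.re ≤ ‖Complex.cosh w‖ := by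
  rw [Complex.cosh, Real.sinh_eq, norm_div, Complex.norm_two]
  gcongr
  calc Real.exp w.re - Real.exp (-w.re)
      = ‖Complex.exp w‖ - ‖Complex.exp (-w)‖ := by
        rw [Complex.norm_exp, Complex.norm_exp, Complex.neg_re]
    _ ≤ ‖Complex.exp w + Complex.exp (-w)‖ := by
        have := norm_sub_norm_le (Complex.exp w) (-Complex.exp (-w))
        simpa using this

lemma cosh_re'' (w : ℂ) : (Complex.cosh w).re = Real.cosh w.re * Real.cos w.im := by
  conv_lhs => rw [← Complex.re_add_im w]
  rw [Complex.cosh_add, Complex.cosh_mul_I, Complex.sinh_mul_I]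
  simp [← Complex.ofReal_cosh, ← Complex.ofReal_sinh, ← Complex.ofReal_cos,
    ← Complex.ofReal_sin]

lemma cosh_le_exp_of_nonneg {x : ℝ} (hx : 0 ≤ x) : Real.cosh x ≤ Real.exp x := by
  rw [Real.cosh_eq]
  nlinarith [Real.exp_le_exp.2 (neg_le_self hx)]

/-- Uniform lower bound for `|cosh (a z)|` on the sector. -/
lemma lower_bound_cosh (φ : ℝ) (hφ1 : 0 < φ) (hφ2 : φ < π / 2) (a : ℝ) (ha : 0 < a)
    (z : ℂ) (hx : ‖z‖ * Real.cos φ ≤ z.re) :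
    min (Real.cos 2⁻¹ * Real.exp (-2⁻¹)) ((1 - Real.exp (-Real.cos φ)) / 2) *
      Real.exp (a * z.re) ≤ ‖Complex.cosh ((a : ℂ) * z)‖ := by
  have hcosφ : 0 < Real.cos φ := Real.cos_pos_of_mem_Ioo ⟨by linarith [Real.pi_pos], hφ2⟩
  have hr : (0:ℝ) ≤ ‖z‖ := norm_nonneg z
  have hx0 : 0 ≤ z.re := le_trans (by positivity) hx
  have hre : ((a : ℂ) * z).re = a * z.re := by simp
  have him : ((a : ℂ) * z).im = a * z.im := by simp
  rcases le_or_gt (a * ‖z‖) 2⁻¹ with hcase | hcase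
  · -- small: use real part
    have him2 : |a * z.im| ≤ 2⁻¹ := by
      rw [abs_mul, abs_of_pos ha]
      calc a * |z.im| ≤ a * ‖z‖ := by
            gcongr; exact Complex.abs_im_le_norm z
        _ ≤ 2⁻¹ := hcase
    have hcos : Real.cos 2⁻¹ ≤ Real.cos (a * z.im) := by
      rw [← Real.cos_abs (a * z.im)]
      apply Real.cos_le_cos_of_nonneg_of_le_pi (abs_nonneg _) _ him2
      calc (2:ℝ)⁻¹ ≤ 1 := by norm_num
        _ ≤ π := by linarith [Real.pi_gt_three]
    have hax : a * z.re ≤ 2⁻¹ := by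
      calc a * z.re ≤ a * ‖z‖ := by gcongr; exact Complex.re_le_norm z
        _ ≤ 2⁻¹ := hcase
    calc min (Real.cos 2⁻¹ * Real.exp (-2⁻¹)) ((1 - Real.exp (-Real.cos φ)) / 2) *
          Real.exp (a * z.re)
        ≤ Real.cos 2⁻¹ * Real.exp (-2⁻¹) * Real.exp (a * z.re) := by
          gcongr; exact min_le_left _ _
      _ ≤ Real.cos 2⁻¹ * Real.exp (-2⁻¹) * Real.exp 2⁻¹ := by
          have h05 : (0:ℝ) < Real.cos 2⁻¹ := by
            apply Real.cos_pos_of_mem_Ioo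
            constructor <;> nlinarith [Real.pi_gt_three]
          gcongr
      _ = Real.cos 2⁻¹ := by
          rw [mul_assoc, ← Real.exp_add]; norm_num
      _ ≤ Real.cosh (a * z.re) * Real.cos (a * z.im) := by
          nlinarith [Real.one_le_cosh (a * z.re), Real.cos_le_one 2⁻¹,
            Real.cos_nonneg_of_mem_Icc (x := (2:ℝ)⁻¹) (by constructor <;> nlinarith [Real.pi_gt_three])]
      _ = (Complex.cosh ((a:ℂ) * z)).re := by rw [cosh_re'', hre, him]
      _ ≤ ‖Complex.cosh ((a:ℂ) * z)‖ := Complex.re_le_norm _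
  · -- large: use sinh lower bound
    have haxl : Real.cos φ ≤ 2 * (a * z.re) := by
      have : 2⁻¹ * Real.cos φ ≤ a * z.re := by
        calc 2⁻¹ * Real.cos φ ≤ (a * ‖z‖) * Real.cos φ := by nlinarith
          _ = a * (‖z‖ * Real.cos φ) := by ring
          _ ≤ a * z.re := by gcongr
      linarith
    calc min (Real.cos 2⁻¹ * Real.exp (-2⁻¹)) ((1 - Real.exp (-Real.cos φ)) / 2) *
          Real.exp (a * z.re)
        ≤ (1 - Real.exp (-Real.cos φ)) / 2 * Real.exp (a * z.re) := by
          gcongr; exact min_le_right _ _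
      _ ≤ (1 - Real.exp (-(2 * (a * z.re)))) / 2 * Real.exp (a * z.re) := by
          gcongr <;> first
            | positivity
            | exact Real.exp_le_exp.2 (by linarith)
      _ = (Real.exp (a * z.re) - Real.exp (-(a * z.re))) / 2 := by
          rw [div_mul_eq_mul_div, sub_mul, one_mul, ← Real.exp_add]; ring_nf
      _ = Real.sinh (a * z.re) := (Real.sinh_eq _).symm
      _ = Real.sinh (((a:ℂ) * z).re) := by rw [hre]
      _ ≤ ‖Complex.cosh ((a:ℂ) * z)‖ := sinh_re_le_abs_cosh _

set_option maxHeartbeats 1000000 in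
/-- For `σ > 0`, `t ∈ (0, σ]` and `φ ∈ (0, π/2)`,
`sup_{z = 0 or |arg z| ≤ φ} |M_t^ε(z) − M_t(z)| → 0` as `ε → 0⁺`. -/
theorem Mfun_uniform_convergence_on_sector (σ t φ : ℝ) (hσ : 0 < σ)
    (ht : t ∈ Set.Ioc 0 σ) (hφ : φ ∈ Set.Ioo 0 (π / 2)) :
    ∀ η : ℝ, 0 < η → ∃ ε₀ : ℝ, 0 < ε₀ ∧ ε₀ < t / 2 ∧
      ∀ ε ∈ Set.Ioo (0 : ℝ) ε₀, ∀ z : ℂ, (z = 0 ∨ |z.arg| ≤ φ) →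
        ‖Mfun σ t ε z - Mfun σ t 0 z‖ ≤ η := by
  intro η hη
  obtain ⟨ht0, htσ⟩ := ht
  obtain ⟨hφ0, hφπ⟩ := hφ
  have hπ := Real.pi_gt_three
  have hcosφ : 0 < Real.cos φ := Real.cos_pos_of_mem_Ioo ⟨by linarith, hφπ⟩
  have hcosφ1 : Real.cos φ ≤ 1 := Real.cos_le_one φ
  set c₁ : ℝ := min (Real.cos 2⁻¹ * Real.exp (-2⁻¹)) ((1 - Real.exp (-Real.cos φ)) / 2)
    with hc₁
  have hc₁pos : 0 < c₁ := by
    apply lt_min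
    · have : 0 < Real.cos 2⁻¹ :=
        Real.cos_pos_of_mem_Ioo (by constructor <;> nlinarith)
      positivity
    · have : Real.exp (-Real.cos φ) < 1 := by
        rw [Real.exp_lt_one_iff]; linarith
      linarith
  set k : ℝ := t / 2 * Real.cos φ with hk
  have hkpos : 0 < k := by positivity
  set C : ℝ := 1 / (c₁ ^ 2 * k) with hC
  have hCpos : 0 < C := by positivity
  refine ⟨min (t * Real.cos φ / 4) (η / C), lt_min (by positivity) (by positivity), ?_, ?_⟩
  · calc min (t * Real.cos φ / 4) (η / C) ≤ t * Real.cos φ / 4 := min_le_left _ _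
      _ < t / 2 := by nlinarith
  · rintro ε ⟨hε0, hεlt⟩ z hz
    have hε14 : ε < t / 4 := by
      have h1 := lt_of_lt_of_le hεlt (min_le_left _ _)
      nlinarith
    have hεσ : ε < σ := by linarith
    rcases eq_or_ne z 0 with rfl | hz0
    · simp [Mfun, hη.le]
    have harg : |z.arg| ≤ φ := by
      rcases hz with h | h
      · exact absurd h hz0
      · exact h
    set r : ℝ := ‖z‖ with hrdef
    have hr : 0 < r := by
      rw [hrdef]
      exact norm_pos_iff.2 hz0
    have hx : r * Real.cos φ ≤ z.re := by
      have hcos : Real.cos φ ≤ Real.cos z.arg := by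
        rw [← Real.cos_abs z.arg]
        apply Real.cos_le_cos_of_nonneg_of_le_pi (abs_nonneg _) (by linarith) harg
      have hre : z.re = r * Real.cos z.arg := by
        rw [Complex.cos_arg hz0, hrdef]
        field_simp
      rw [hre]
      gcongr
    have hx0 : 0 ≤ z.re := le_trans (by positivity) hx
    -- lower bounds for the denominators
    have hDε := lower_bound_cosh φ hφ0 hφπ (σ - ε) (by linarith) z hx
    have hD0 := lower_bound_cosh φ hφ0 hφπ σ hσ z hx
    rw [Complex.ofReal_sub] at hDε
    have hDεpos : 0 < ‖Complex.cosh ((↑σ - ↑ε) * z)‖ :=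
      lt_of_lt_of_le (by positivity) hDε
    have hD0pos : 0 < ‖Complex.cosh ((↑σ : ℂ) * z)‖ :=
      lt_of_lt_of_le (by positivity) hD0
    have hDεne : Complex.cosh ((↑σ - ↑ε) * z) ≠ 0 := by
      intro h; rw [h] at hDεpos; simp at hDεpos
    have hD0ne : Complex.cosh ((↑σ : ℂ) * z) ≠ 0 := by
      intro h; rw [h] at hD0pos; simp at hD0pos
    -- numerator bound
    have hN : ‖Complex.cosh ((↑t - ↑σ) * z)‖ ≤ Real.exp ((σ - t) * z.re) := by
      calc ‖Complex.cosh ((↑t - ↑σ) * z)‖ ≤ Real.cosh (((↑t - ↑σ) * z).re) :=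
            abs_cosh_le'' _
        _ = Real.cosh ((σ - t) * z.re) := by
            have : ((↑t - ↑σ : ℂ) * z).re = (t - σ) * z.re := by
              simp [Complex.sub_re, Complex.mul_re]
            rw [this, show (t - σ) * z.re = -((σ - t) * z.re) by ring, Real.cosh_neg]
        _ ≤ Real.exp ((σ - t) * z.re) := cosh_le_exp_of_nonneg (by nlinarith)
    -- mean value bound on the difference of denominators
    have hMVT : ‖Complex.cosh ((↑σ : ℂ) * z) - Complex.cosh ((↑σ - ↑ε) * z)‖ ≤
        Real.exp (σ * z.re) * (ε * r) := by
      set A : ℂ := (↑σ - ↑ε) * z with hA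
      set B : ℂ := (↑σ : ℂ) * z with hB
      have hseg : ∀ w ∈ segment ℝ A B, ‖Complex.sinh w‖ ≤ Real.exp (σ * z.re) := by
        rintro w ⟨p, q, hp, hq, hpq, rfl⟩
        have hwre : (p • A + q • B).re = p * ((σ - ε) * z.re) + q * (σ * z.re) := by
          simp [hA, hB, Complex.add_re, Complex.real_smul, Complex.mul_re,
            Complex.sub_re, Complex.sub_im, Complex.ofReal_re, Complex.ofReal_im]
          try ring
        have h1 : 0 ≤ (p • A + q • B).re := by
          rw [hwre]; have : (0:ℝ) ≤ σ - ε := by linarith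
          positivity
        have h2 : (p • A + q • B).re ≤ σ * z.re := by
          rw [hwre]
          have hq1 : q = 1 - p := by linarith
          rw [hq1]
          nlinarith [mul_nonneg (mul_nonneg hp hε0.le) hx0]
        calc ‖Complex.sinh (p • A + q • B)‖ ≤ Real.cosh ((p • A + q • B).re) :=
              abs_sinh_le'' _
          _ ≤ Real.cosh (σ * z.re) := by
              rw [Real.cosh_le_cosh]
              rw [_root_.abs_of_nonneg h1, _root_.abs_of_nonneg (by positivity)]
              exact h2
          _ ≤ Real.exp (σ * z.re) := cosh_le_exp_of_nonneg (by positivity)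
      have hcalc := (convex_segment A B).norm_image_sub_le_of_norm_hasDerivWithin_le
        (f := Complex.cosh) (f' := Complex.sinh)
        (fun w _ => (Complex.hasDerivAt_cosh w).hasDerivWithinAt)
        hseg (left_mem_segment ℝ A B) (right_mem_segment ℝ A B)
      have hBA : B - A = (↑ε : ℂ) * z := by rw [hA, hB]; ring
      have hnorm : ‖B - A‖ = ε * r := by
        rw [hBA, norm_mul, Complex.norm_real, Real.norm_eq_abs, abs_of_pos hε0,
          hrdef]
      calc ‖Complex.cosh B - Complex.cosh A‖
            = ‖Complex.cosh B - Complex.cosh A‖ := rfl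
        _ ≤ Real.exp (σ * z.re) * ‖B - A‖ := hcalc
        _ = Real.exp (σ * z.re) * (ε * r) := by rw [hnorm]
    -- put everything together
    have key : Mfun σ t ε z - Mfun σ t 0 z =
        Complex.cosh ((↑t - ↑σ) * z) *
          (Complex.cosh ((↑σ : ℂ) * z) - Complex.cosh ((↑σ - ↑ε) * z)) /
          (Complex.cosh ((↑σ - ↑ε) * z) * Complex.cosh ((↑σ : ℂ) * z)) := by
      unfold Mfun
      rw [Complex.ofReal_zero, sub_zero, div_sub_div _ _ hDεne hD0ne]
      ring
    have key2 : ‖Mfun σ t ε z - Mfun σ t 0 z‖ ≤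
        ε * r * Real.exp ((ε - t) * z.re) / c₁ ^ 2 := by
      rw [key, norm_div, norm_mul, norm_mul]
      rw [div_le_div_iff₀ (mul_pos hDεpos hD0pos) (pow_pos hc₁pos 2)]
      calc ‖Complex.cosh ((↑t - ↑σ) * z)‖ *
            ‖Complex.cosh ((↑σ : ℂ) * z) - Complex.cosh ((↑σ - ↑ε) * z)‖ * c₁ ^ 2
          ≤ Real.exp ((σ - t) * z.re) * (Real.exp (σ * z.re) * (ε * r)) * c₁ ^ 2 := by
            gcongr
        _ = ε * r * Real.exp ((ε - t) * z.re) *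
            (c₁ * Real.exp ((σ - ε) * z.re) * (c₁ * Real.exp (σ * z.re))) := by
            rw [show (σ - t) * z.re = (ε - t) * z.re + (σ - ε) * z.re by ring, Real.exp_add]
            ring
        _ ≤ ε * r * Real.exp ((ε - t) * z.re) *
            (‖Complex.cosh ((↑σ - ↑ε) * z)‖ *
              ‖Complex.cosh ((↑σ : ℂ) * z)‖) := by
            have hεr : 0 ≤ ε * r * Real.exp ((ε - t) * z.re) :=
              mul_nonneg (mul_nonneg hε0.le hr.le) (Real.exp_pos _).le
            gcongr
    -- final numeric estimate
    have hre : r * Real.exp ((ε - t) * z.re) ≤ 1 / k := by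
      have hexp : Real.exp ((ε - t) * z.re) ≤ Real.exp (-(k * r)) := by
        apply Real.exp_le_exp.2
        have h1 : (ε - t) * z.re ≤ -(t / 2) * z.re := by nlinarith
        have h2 : -(t / 2) * z.re ≤ -(t / 2) * (r * Real.cos φ) := by nlinarith
        rw [hk]; nlinarith
      have hkr : k * r ≤ Real.exp (k * r) := by
        linarith [Real.add_one_le_exp (k * r)]
      calc r * Real.exp ((ε - t) * z.re) ≤ r * Real.exp (-(k * r)) := by gcongr
        _ ≤ 1 / k := by
          rw [le_div_iff₀ hkpos, Real.exp_neg]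
          have h3 := mul_le_mul_of_nonneg_right hkr (Real.exp_pos (-(k * r))).le
          rw [← Real.exp_add] at h3
          simp only [add_neg_cancel, Real.exp_zero] at h3
          rw [Real.exp_neg] at h3
          nlinarith
    calc ‖Mfun σ t ε z - Mfun σ t 0 z‖ ≤
          ε * r * Real.exp ((ε - t) * z.re) / c₁ ^ 2 := key2
      _ = ε * (r * Real.exp ((ε - t) * z.re)) / c₁ ^ 2 := by ring
      _ ≤ ε * (1 / k) / c₁ ^ 2 :=
          (div_le_div_iff_of_pos_right (pow_pos hc₁pos 2)).mpr
            (mul_le_mul_of_nonneg_left hre hε0.le)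
      _ = ε * C := by rw [hC]; ring
      _ ≤ (η / C) * C := by
          have : ε ≤ η / C := le_of_lt (lt_of_lt_of_le hεlt (min_le_right _ _))
          gcongr
      _ = η := by field_simp
end

section
/- Let σ > 0 and φ ∈ (0, π/2). Then the function g₁(z) := (1 − e^{−2σz}) / (e^{σz} + e^{−σz}) belongs to H₀^∞(S_φ); that is, g₁ is holomorphic on the open sector S_φ and there exist constants C > 0 and s > 0 such that |g₁(z)| ≤ C · |z|^s / (1 + |z|^{2s}) for all z ∈ S_φ. -/
open Real Complex

/-- The open sector `S_φ = {z ∈ ℂ ∖ {0} : |arg z| < φ}`. -/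
def sector (φ : ℝ) : Set ℂ := {z : ℂ | z ≠ 0 ∧ |z.arg| < φ}

set_option maxHeartbeats 1000000 in
/-- For `σ > 0` and `φ ∈ (0, π/2)`, the function
`g₁(z) = (1 − e^{−2σz})/(e^{σz} + e^{−σz})` belongs to `H₀^∞(S_φ)`: it is holomorphic
on the sector `S_φ` and satisfies `|g₁(z)| ≤ C |z|^s/(1 + |z|^{2s})` there. -/
theorem g1_mem_H0infty (σ φ : ℝ) (hσ : 0 < σ) (hφ : φ ∈ Set.Ioo 0 (π / 2)) :
    DifferentiableOn ℂ
      (fun z : ℂ => (1 - Complex.exp (-(2 * ↑σ * z))) /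
        (Complex.exp (↑σ * z) + Complex.exp (-(↑σ * z)))) (sector φ) ∧
    ∃ C s : ℝ, 0 < C ∧ 0 < s ∧ ∀ z ∈ sector φ,
      ‖(1 - Complex.exp (-(2 * ↑σ * z))) /
          (Complex.exp (↑σ * z) + Complex.exp (-(↑σ * z)))‖ ≤
        C * ‖z‖ ^ s / (1 + ‖z‖ ^ (2 * s)) := by
  obtain ⟨hφ0, hφ2⟩ := hφ
  have hπ : (0:ℝ) < π := Real.pi_pos
  have hc : 0 < Real.cos φ := Real.cos_pos_of_mem_Ioo ⟨by linarith, hφ2⟩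
  set c := Real.cos φ with hc_def
  have hc1 : c ≤ 1 := Real.cos_le_one φ
  -- basic facts about points of the sector
  have hre : ∀ z ∈ sector φ, ‖z‖ * c ≤ z.re ∧ 0 < z.re := by
    intro z hz
    obtain ⟨hz0, harg⟩ := hz
    have habs : 0 < ‖z‖ := norm_pos_iff.mpr hz0
    have hcosarg : c ≤ Real.cos z.arg := by
      rw [← Real.cos_abs z.arg]
      exact Real.cos_le_cos_of_nonneg_of_le_pi (abs_nonneg _) (by linarith) harg.le
    have hre_eq : z.re = ‖z‖ * Real.cos z.arg := by
      rw [Complex.cos_arg hz0]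
      field_simp
    refine ⟨?_, ?_⟩
    · rw [hre_eq]; exact mul_le_mul_of_nonneg_left hcosarg habs.le
    · rw [hre_eq]; exact mul_pos habs (lt_of_lt_of_le hc hcosarg)
  -- denominator never vanishes on the sector
  have hden_ne : ∀ z ∈ sector φ,
      Complex.exp (↑σ * z) + Complex.exp (-(↑σ * z)) ≠ 0 := by
    intro z hz h
    have hzre : 0 < z.re := (hre z hz).2
    have he : Complex.exp (↑σ * z) = -Complex.exp (-(↑σ * z)) := by
      linear_combination h
    have habs : Real.exp ((↑σ * z : ℂ).re) = Real.exp ((-(↑σ * z) : ℂ).re) := by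
      have := congrArg (‖·‖) he
      simpa [Complex.norm_exp] using this
    have h2 : (↑σ * z : ℂ).re = (-(↑σ * z) : ℂ).re := Real.exp_injective habs
    simp only [Complex.neg_re, Complex.mul_re, Complex.ofReal_re, Complex.ofReal_im] at h2
    nlinarith
  constructor
  · -- holomorphy
    apply DifferentiableOn.div
    · exact ((differentiable_const _).sub
        ((Complex.differentiable_exp).comp (by fun_prop))).differentiableOn
    · exact ((Complex.differentiable_exp.comp (by fun_prop)).add
        (Complex.differentiable_exp.comp (by fun_prop))).differentiableOn
    · exact hden_ne
  · -- the bound, with s = 1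
    set d : ℝ := 1 - Real.exp (-(c/2)) with hd_def
    have hd : 0 < d := by
      have : Real.exp (-(c/2)) < 1 := Real.exp_lt_one_iff.mpr (by linarith)
      simp only [hd_def]; linarith
    set m : ℝ := min (1/(4*σ)) (σ*c) with hm_def
    have hm : 0 < m := lt_min (by positivity) (by positivity)
    refine ⟨max (4*σ*(1 + 1/(16*σ^2))) (2/(d*m)), 1, lt_of_lt_of_le (by positivity)
      (le_max_left _ _), one_pos, ?_⟩
    intro z hz
    set C := max (4*σ*(1 + 1/(16*σ^2))) (2/(d*m)) with hC_def
    have hC1 : 4*σ*(1 + 1/(16*σ^2)) ≤ C := le_max_left _ _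
    have hC2 : 2/(d*m) ≤ C := le_max_right _ _
    obtain ⟨hz0, harg⟩ := hz
    set r := ‖z‖ with hr_def
    have hr : 0 < r := norm_pos_iff.mpr hz0
    obtain ⟨hrc, hzre⟩ := hre z ⟨hz0, harg⟩
    set t := σ * z.re with ht_def
    have ht : 0 < t := by positivity
    have htr : σ * c * r ≤ t := by
      rw [ht_def]; nlinarith
    -- rewrite powers
    have hpow1 : r ^ (1:ℝ) = r := Real.rpow_one r
    have hpow2 : r ^ ((2:ℝ)*1) = r^2 := by
      rw [mul_one, show ((2:ℝ)) = ((2:ℕ):ℝ) by norm_num, Real.rpow_natCast]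
    rw [hpow1, hpow2]
    have hdenpos : 0 < 1 + r^2 := by positivity
    rw [norm_div]
    have hret : ((↑σ * z : ℂ)).re = t := by
      simp [Complex.mul_re, ht_def]
    have habs_e1 : ‖Complex.exp (↑σ * z)‖ = Real.exp t := by
      rw [Complex.norm_exp, hret]
    have habs_e2 : ‖Complex.exp (-(↑σ * z))‖ = Real.exp (-t) := by
      rw [Complex.norm_exp]; simp [hret]
    rcases le_or_gt (σ * r) (1/4) with hsmall | hlarge
    · -- small |z| : σ r ≤ 1/4
      have habsz : ‖-(2 * ↑σ * z)‖ = 2 * (σ * r) := by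
        simp [hr_def, abs_of_pos hσ]; ring
      have hnum : ‖1 - Complex.exp (-(2 * ↑σ * z))‖ ≤ 4 * (σ * r) := by
        have h := Complex.norm_exp_sub_one_le (x := -(2 * ↑σ * z))
          (by rw [habsz]; linarith)
        rw [habsz] at h
        calc ‖1 - Complex.exp (-(2 * ↑σ * z))‖
            = ‖Complex.exp (-(2 * ↑σ * z)) - 1‖ := by
              exact norm_sub_rev _ _
          _ ≤ 2 * (2 * (σ * r)) := h
          _ = 4 * (σ * r) := by ring
      have habsu : ‖↑σ * z‖ = σ * r := by
        simp [hr_def, abs_of_pos hσ]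
      have habsu' : ‖-(↑σ * z)‖ = σ * r := by
        rw [norm_neg, habsu]
      have hd1 := Complex.norm_exp_sub_one_le (x := (↑σ * z)) (by rw [habsu]; linarith)
      have hd2 := Complex.norm_exp_sub_one_le (x := -(↑σ * z)) (by rw [habsu']; linarith)
      rw [habsu] at hd1
      rw [habsu'] at hd2
      have hden : 1 ≤ ‖Complex.exp (↑σ * z) + Complex.exp (-(↑σ * z))‖ := by
        have key : Complex.exp (↑σ * z) + Complex.exp (-(↑σ * z)) =
            (2:ℂ) - ((1 - Complex.exp (↑σ * z)) + (1 - Complex.exp (-(↑σ * z)))) := by ring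
        have e1 : ‖1 - Complex.exp (↑σ * z)‖ ≤ 2 * (σ * r) := by
          calc ‖1 - Complex.exp (↑σ * z)‖
              = ‖Complex.exp (↑σ * z) - 1‖ := by
                exact norm_sub_rev _ _
            _ ≤ 2 * (σ * r) := hd1
        have e2 : ‖1 - Complex.exp (-(↑σ * z))‖ ≤ 2 * (σ * r) := by
          calc ‖1 - Complex.exp (-(↑σ * z))‖
              = ‖Complex.exp (-(↑σ * z)) - 1‖ := by
                exact norm_sub_rev _ _
            _ ≤ 2 * (σ * r) := hd2
        have tri : ‖(1 - Complex.exp (↑σ * z)) + (1 - Complex.exp (-(↑σ * z)))‖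
            ≤ 4 * (σ * r) := by
          calc ‖(1 - Complex.exp (↑σ * z)) + (1 - Complex.exp (-(↑σ * z)))‖
              ≤ ‖1 - Complex.exp (↑σ * z)‖
                + ‖1 - Complex.exp (-(↑σ * z))‖ := norm_add_le _ _
            _ ≤ 4 * (σ * r) := by linarith
        have rev : ‖(2:ℂ)‖
            - ‖(1 - Complex.exp (↑σ * z)) + (1 - Complex.exp (-(↑σ * z)))‖
            ≤ ‖(2:ℂ) - ((1 - Complex.exp (↑σ * z)) + (1 - Complex.exp (-(↑σ * z))))‖ := by
          simpa using
            norm_sub_norm_le (2:ℂ) ((1 - Complex.exp (↑σ * z)) + (1 - Complex.exp (-(↑σ * z))))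
        have habs2 : ‖(2:ℂ)‖ = 2 := by norm_num
        rw [key]
        rw [habs2] at rev
        linarith
      have step1 : ‖1 - Complex.exp (-(2 * ↑σ * z))‖ /
          ‖Complex.exp (↑σ * z) + Complex.exp (-(↑σ * z))‖ ≤ 4 * (σ * r) := by
        calc ‖1 - Complex.exp (-(2 * ↑σ * z))‖ /
            ‖Complex.exp (↑σ * z) + Complex.exp (-(↑σ * z))‖
            ≤ (4 * (σ * r)) / 1 := div_le_div₀ (by positivity) hnum one_pos hden
          _ = 4 * (σ * r) := by ring
      refine le_trans step1 ?_
      rw [le_div_iff₀ hdenpos]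
      have hr2 : r^2 ≤ 1/(16*σ^2) := by
        have h16 : σ*r*(σ*r) ≤ (1/4)*(1/4) :=
          mul_self_le_mul_self (by positivity) hsmall
        rw [le_div_iff₀ (by positivity : (0:ℝ) < 16*σ^2)]
        nlinarith [h16]
      have key2 : 4*σ*(1 + r^2) ≤ C := by
        refine le_trans ?_ hC1
        have h4 : (0:ℝ) ≤ 4*σ := by positivity
        have : 1 + r^2 ≤ 1 + 1/(16*σ^2) := by linarith
        exact mul_le_mul_of_nonneg_left this h4
      calc 4*(σ*r)*(1+r^2) = (4*σ*(1+r^2))*r := by ring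
        _ ≤ C*r := mul_le_mul_of_nonneg_right key2 hr.le
    · -- large |z| : σ r > 1/4
      have hnum : ‖1 - Complex.exp (-(2 * ↑σ * z))‖ ≤ 2 := by
        have habs_e3 : ‖Complex.exp (-(2 * ↑σ * z))‖ = Real.exp (-(2*t)) := by
          rw [Complex.norm_exp]
          congr 1
          simp only [Complex.neg_re, Complex.mul_re, Complex.mul_im, Complex.ofReal_re,
            Complex.ofReal_im, Complex.re_ofNat, Complex.im_ofNat]
          rw [ht_def]; ring
        have tri : ‖1 - Complex.exp (-(2 * ↑σ * z))‖
            ≤ ‖(1:ℂ)‖ + ‖Complex.exp (-(2 * ↑σ * z))‖ := by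
          simpa [sub_eq_add_neg] using
            norm_add_le (1:ℂ) (-Complex.exp (-(2 * ↑σ * z)))
        have he : Real.exp (-(2*t)) ≤ 1 := Real.exp_le_one_iff.mpr (by linarith)
        simp only [norm_one, habs_e3] at tri
        linarith
      have hden : Real.exp t * d ≤
          ‖Complex.exp (↑σ * z) + Complex.exp (-(↑σ * z))‖ := by
        have rev : ‖Complex.exp (↑σ * z)‖ - ‖Complex.exp (-(↑σ * z))‖
            ≤ ‖Complex.exp (↑σ * z) + Complex.exp (-(↑σ * z))‖ := by
          simpa [sub_neg_eq_add] using
            norm_sub_norm_le (Complex.exp (↑σ * z)) (-Complex.exp (-(↑σ * z)))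
        rw [habs_e1, habs_e2] at rev
        have h2t : c/2 ≤ 2*t := by nlinarith
        have he2 : Real.exp (-(2*t)) ≤ Real.exp (-(c/2)) := Real.exp_le_exp.mpr (by linarith)
        have heq : Real.exp (-t) = Real.exp t * Real.exp (-(2*t)) := by
          rw [← Real.exp_add]; ring_nf
        have : Real.exp t - Real.exp (-t) ≥ Real.exp t * d := by
          rw [heq, hd_def]
          have hp := Real.exp_pos t
          nlinarith
        linarith
      have hdpos : 0 < Real.exp t * d := by positivity
      have step1 : ‖1 - Complex.exp (-(2 * ↑σ * z))‖ /
          ‖Complex.exp (↑σ * z) + Complex.exp (-(↑σ * z))‖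
          ≤ 2 / (Real.exp t * d) :=
        div_le_div₀ (by norm_num) hnum hdpos hden
      refine le_trans step1 ?_
      rw [div_le_div_iff₀ hdpos hdenpos]
      -- key facts
      have hCdm : 2 ≤ C * (d * m) := by
        rw [div_le_iff₀ (by positivity : (0:ℝ) < d*m)] at hC2
        linarith
      have hexp : m * (4*σ + r) ≤ Real.exp t := by
        have h1 : m * (4*σ) ≤ 1 := by
          have hle : m ≤ 1/(4*σ) := min_le_left _ _
          calc m * (4*σ) ≤ (1/(4*σ)) * (4*σ) :=
                mul_le_mul_of_nonneg_right hle (by positivity)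
            _ = 1 := by field_simp
        have h2 : m * r ≤ σ * c * r := by
          have := min_le_right (1/(4*σ)) (σ*c)
          rw [← hm_def] at this
          nlinarith
        have h3 : σ * c * r + 1 ≤ Real.exp (σ * c * r) := Real.add_one_le_exp _
        have h4 : Real.exp (σ * c * r) ≤ Real.exp t := Real.exp_le_exp.mpr htr
        nlinarith
      have hq : 1 + r^2 ≤ (4*σ + r) * r := by nlinarith
      -- chain
      have hCr : 0 ≤ C * r := by
        have : 0 < C := lt_of_lt_of_le (by positivity) hC1
        positivity
      calc 2 * (1 + r^2) ≤ 2 * ((4*σ + r) * r) := by linarith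
        _ ≤ (C * (d * m)) * ((4*σ + r) * r) :=
            mul_le_mul_of_nonneg_right hCdm (by positivity)
        _ = (C * r) * (m * (4*σ + r)) * d := by ring
        _ ≤ (C * r) * Real.exp t * d :=
            mul_le_mul_of_nonneg_right
              (mul_le_mul_of_nonneg_left hexp hCr) hd.le
        _ = C * r * (Real.exp t * d) := by ring
end

section
/- Let τ > 0 and φ ∈ (0, π). Then the function f(z) := 1/√(τ + z) − 1/(√z + √(τ + z)), where √ denotes the principal branch of the complex square root, belongs to H₀^∞(S_φ); that is, f is holomorphic on the open sector S_φ and there exist constants C > 0 and s > 0 such that |f(z)| ≤ C · |z|^s / (1 + |z|^{2s}) for all z ∈ S_φ. (In particular one may take s = 1/2.) -/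
open Real Complex

lemma abs_half_pow (w : ℂ) (hw : w ≠ 0) :
    ‖w ^ (1/2 : ℂ)‖ = ‖w‖ ^ (1/2 : ℝ) := by
  rw [Complex.norm_cpow_of_ne_zero hw]
  norm_num

lemma re_half_pow (w : ℂ) (hw : w ≠ 0) :
    (w ^ (1/2 : ℂ)).re = ‖w‖ ^ (1/2 : ℝ) * Real.cos (w.arg / 2) := by
  rw [Complex.cpow_def_of_ne_zero hw, Complex.exp_re]
  have h1 : (Complex.log w * (1/2)).re = Real.log (‖w‖) / 2 := by
    simp [Complex.mul_re, Complex.log_re]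
    ring
  have h2 : (Complex.log w * (1/2)).im = w.arg / 2 := by
    simp [Complex.mul_im, Complex.log_im]
    ring
  rw [h1, h2]
  congr 1
  rw [Real.rpow_def_of_pos (norm_pos_iff.2 hw)]
  ring_nf

lemma cos_arg_add_le (τ : ℝ) (hτ : 0 < τ) (z : ℂ) (hz : z ≠ 0) (hzτ : (↑τ + z) ≠ 0) :
    Real.cos z.arg ≤ Real.cos (↑τ + z).arg := by
  rw [Complex.cos_arg hz, Complex.cos_arg hzτ]
  set a := z.re
  set b := z.im
  have hr : 0 < ‖z‖ := norm_pos_iff.2 hz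
  have hR : 0 < ‖↑τ + z‖ := norm_pos_iff.2 hzτ
  have hre : (↑τ + z).re = τ + a := by simp [a]
  have him : (↑τ + z).im = b := by simp [b]
  have hr2 : (‖z‖) ^ 2 = a ^ 2 + b ^ 2 := by
    rw [Complex.sq_norm, Complex.normSq_apply]; ring
  have hR2 : (‖↑τ + z‖) ^ 2 = (τ + a) ^ 2 + b ^ 2 := by
    rw [Complex.sq_norm, Complex.normSq_apply, hre, him]; ring
  rw [hre, div_le_div_iff₀ hr hR]
  set r := ‖z‖
  set R := ‖↑τ + z‖
  rcases le_or_gt 0 a with ha | ha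
  · have haa : a ^ 2 ≤ (τ + a) ^ 2 := sq_le_sq' (by linarith) (by linarith)
    have e1 : (a * R) ^ 2 = a ^ 2 * ((τ + a) ^ 2 + b ^ 2) := by rw [mul_pow, hR2]
    have e2 : ((τ + a) * r) ^ 2 = (τ + a) ^ 2 * (a ^ 2 + b ^ 2) := by rw [mul_pow, hr2]
    have hsq : (a * R) ^ 2 ≤ ((τ + a) * r) ^ 2 := by
      rw [e1, e2]; nlinarith [mul_le_mul_of_nonneg_left haa (sq_nonneg b)]
    exact (abs_le_of_sq_le_sq' hsq (mul_nonneg (by linarith) hr.le)).2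
  · rcases le_or_gt 0 (τ + a) with hta | hta
    · have h1 : a * R ≤ 0 := mul_nonpos_of_nonpos_of_nonneg ha.le hR.le
      have h2 : 0 ≤ (τ + a) * r := mul_nonneg hta hr.le
      linarith
    · have haa : (τ + a) ^ 2 ≤ a ^ 2 := by nlinarith [mul_pos hτ (show (0:ℝ) < -(τ + 2*a) by linarith)]
      have e1 : (-(a * R)) ^ 2 = a ^ 2 * ((τ + a) ^ 2 + b ^ 2) := by
        rw [neg_pow, mul_pow, hR2]; ring
      have e2 : ((τ + a) * r) ^ 2 = (τ + a) ^ 2 * (a ^ 2 + b ^ 2) := by rw [mul_pow, hr2]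
      have hsq : ((τ + a) * r) ^ 2 ≤ (-(a * R)) ^ 2 := by
        rw [e1, e2]; nlinarith [mul_le_mul_of_nonneg_left haa (sq_nonneg b)]
      have := (abs_le_of_sq_le_sq' hsq (by nlinarith : (0:ℝ) ≤ -(a * R))).1
      linarith

lemma sector_aux (τ φ : ℝ) (hτ : 0 < τ) (hφ0 : 0 < φ) (hφπ : φ < π) (z : ℂ)
    (hz0 : z ≠ 0) (harg : |z.arg| < φ) :
    (↑τ + z) ≠ 0 ∧ |(↑τ + z).arg| < φ ∧ 0 ≤ (z ^ (1/2 : ℂ)).re ∧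
      ‖↑τ + z‖ ^ (1/2 : ℝ) * Real.cos (φ / 2) ≤ ((↑τ + z) ^ (1/2 : ℂ)).re := by
  have hzπ : |z.arg| < π := harg.trans hφπ
  have hτz0 : (↑τ : ℂ) + z ≠ 0 := by
    intro h
    have hz' : z = -(↑τ : ℂ) := by linear_combination h
    have : z.arg = π := Complex.arg_eq_pi_iff.2 (by constructor <;> simp [hz', hτ])
    rw [this, _root_.abs_of_nonneg Real.pi_pos.le] at hzπ
    exact lt_irrefl _ hzπ
  have hcos := cos_arg_add_le τ hτ z hz0 hτz0
  have hargw : |(↑τ + z).arg| ≤ |z.arg| := by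
    by_contra h
    push_neg at h
    have := Real.strictAntiOn_cos ⟨abs_nonneg _, Complex.abs_arg_le_pi z⟩
      ⟨abs_nonneg _, Complex.abs_arg_le_pi (↑τ + z)⟩ h
    rw [Real.cos_abs, Real.cos_abs] at this
    linarith
  refine ⟨hτz0, lt_of_le_of_lt hargw harg, ?_, ?_⟩
  · rw [re_half_pow z hz0]
    apply mul_nonneg (Real.rpow_nonneg (norm_nonneg _) _)
    apply Real.cos_nonneg_of_mem_Icc
    constructor
    · rw [le_div_iff₀ (by norm_num : (0:ℝ) < 2)]
      have := abs_le.1 (Complex.abs_arg_le_pi z)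
      linarith [Real.pi_pos]
    · have := abs_le.1 (Complex.abs_arg_le_pi z)
      linarith [Real.pi_pos]
  · rw [re_half_pow _ hτz0]
    apply mul_le_mul_of_nonneg_left _ (Real.rpow_nonneg (norm_nonneg _) _)
    have h1 : |(↑τ + z).arg| / 2 ≤ φ / 2 := by
      have := hargw.trans harg.le; linarith
    have h2 : Real.cos (φ / 2) ≤ Real.cos (|(↑τ + z).arg| / 2) :=
      Real.cos_le_cos_of_nonneg_of_le_pi (by positivity) (by linarith [Real.pi_pos]) h1
    calc Real.cos (φ / 2) ≤ Real.cos (|(↑τ + z).arg| / 2) := h2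
      _ = Real.cos ((↑τ + z).arg / 2) := by
          rw [show |(↑τ + z).arg| / 2 = |(↑τ + z).arg / 2| by rw [abs_div]; norm_num,
            Real.cos_abs]

lemma abs_add_lower (τ φ : ℝ) (hτ : 0 < τ) (hφ0 : 0 < φ) (hφπ : φ < π) (z : ℂ)
    (hz0 : z ≠ 0) (harg : |z.arg| < φ) :
    Real.sqrt (min 1 (1 + Real.cos φ) * min (τ ^ 2) 1 / 2) * (1 + ‖z‖)
      ≤ ‖↑τ + z‖ := by
  set a := z.re with ha_def
  set b := z.im with hb_def
  set r := ‖z‖ with hr_def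
  set R := ‖↑τ + z‖ with hR_def
  set c := Real.cos φ with hc_def
  have hr : 0 < r := norm_pos_iff.2 hz0
  have hR0 : 0 ≤ R := norm_nonneg _
  have hr2 : a ^ 2 + b ^ 2 = r ^ 2 := by
    rw [hr_def, Complex.sq_norm, Complex.normSq_apply]; ring
  have hR2 : R ^ 2 = (τ + a) ^ 2 + b ^ 2 := by
    rw [hR_def, Complex.sq_norm, Complex.normSq_apply]
    simp only [Complex.add_re, Complex.add_im, Complex.ofReal_re, Complex.ofReal_im]
    ring
  have hc1 : c ≤ 1 := Real.cos_le_one φ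
  have hcm1 : -1 < c := by
    have := Real.strictAntiOn_cos ⟨hφ0.le, hφπ.le⟩
      ⟨Real.pi_pos.le, le_refl π⟩ hφπ
    rw [Real.cos_pi] at this
    exact this
  have hccos : c ≤ Real.cos z.arg := by
    rw [← Real.cos_abs]
    exact Real.cos_le_cos_of_nonneg_of_le_pi (abs_nonneg _) hφπ.le harg.le
  have ha : r * c ≤ a := by
    rw [Complex.cos_arg hz0] at hccos
    calc r * c ≤ r * (a / r) := mul_le_mul_of_nonneg_left hccos hr.le
      _ = a := by field_simp
  have hε : 0 < min 1 (1 + c) * min (τ ^ 2) 1 / 2 := by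
    have : (0:ℝ) < min 1 (1 + c) := lt_min one_pos (by linarith)
    have h2 : (0:ℝ) < min (τ ^ 2) 1 := lt_min (by positivity) one_pos
    positivity
  have k1 : τ ^ 2 + 2 * τ * (r * c) + r ^ 2 ≤ R ^ 2 := by
    rw [hR2]
    nlinarith [mul_le_mul_of_nonneg_left ha hτ.le]
  have k2 : min 1 (1 + c) * (τ ^ 2 + r ^ 2) ≤ τ ^ 2 + 2 * τ * (r * c) + r ^ 2 := by
    rcases le_or_gt 0 c with hc0 | hc0
    · have h1 : min 1 (1 + c) * (τ ^ 2 + r ^ 2) ≤ 1 * (τ ^ 2 + r ^ 2) :=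
        mul_le_mul_of_nonneg_right (min_le_left _ _) (by positivity)
      nlinarith [mul_nonneg (mul_nonneg hτ.le hr.le) hc0]
    · have h1 : min 1 (1 + c) * (τ ^ 2 + r ^ 2) ≤ (1 + c) * (τ ^ 2 + r ^ 2) :=
        mul_le_mul_of_nonneg_right (min_le_right _ _) (by positivity)
      nlinarith [mul_nonneg (neg_nonneg.2 hc0.le) (sq_nonneg (τ - r))]
  have k3 : min (τ ^ 2) 1 * (1 + r) ^ 2 / 2 ≤ τ ^ 2 + r ^ 2 := by
    nlinarith [sq_nonneg (1 - r), min_le_left (τ ^ 2) 1,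
      mul_le_mul_of_nonneg_right (min_le_right (τ ^ 2) 1) (sq_nonneg r),
      lt_min (show (0:ℝ) < τ ^ 2 by positivity) one_pos, hr.le]
  have key : min 1 (1 + c) * min (τ ^ 2) 1 / 2 * (1 + r) ^ 2 ≤ R ^ 2 := by
    have hm1 : (0:ℝ) ≤ min 1 (1 + c) := le_min zero_le_one (by linarith)
    calc min 1 (1 + c) * min (τ ^ 2) 1 / 2 * (1 + r) ^ 2
        = min 1 (1 + c) * (min (τ ^ 2) 1 * (1 + r) ^ 2 / 2) := by ring
      _ ≤ min 1 (1 + c) * (τ ^ 2 + r ^ 2) := mul_le_mul_of_nonneg_left k3 hm1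
      _ ≤ τ ^ 2 + 2 * τ * (r * c) + r ^ 2 := k2
      _ ≤ R ^ 2 := k1
  calc Real.sqrt (min 1 (1 + c) * min (τ ^ 2) 1 / 2) * (1 + r)
      = Real.sqrt (min 1 (1 + c) * min (τ ^ 2) 1 / 2 * (1 + r) ^ 2) := by
        rw [Real.sqrt_mul hε.le, Real.sqrt_sq (by positivity)]
    _ ≤ Real.sqrt (R ^ 2) := Real.sqrt_le_sqrt key
    _ = R := Real.sqrt_sq hR0

/-- For `τ > 0` and `φ ∈ (0, π)`, the function
`f(z) = 1/√(τ + z) − 1/(√z + √(τ + z))` (principal branch square roots, realised here by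
the principal complex power `w ^ (1/2)`) belongs to `H₀^∞(S_φ)`: it is holomorphic on the
sector `S_φ` and satisfies `|f(z)| ≤ C |z|^s/(1 + |z|^{2s})` there. -/
theorem riesz_multiplier_mem_H0infty (τ φ : ℝ) (hτ : 0 < τ) (hφ : φ ∈ Set.Ioo 0 π) :
    DifferentiableOn ℂ
      (fun z : ℂ => 1 / (↑τ + z) ^ (1/2 : ℂ) -
        1 / (z ^ (1/2 : ℂ) + (↑τ + z) ^ (1/2 : ℂ))) (sector φ) ∧
    ∃ C s : ℝ, 0 < C ∧ 0 < s ∧ ∀ z ∈ sector φ,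
      ‖1 / (↑τ + z) ^ (1/2 : ℂ) -
          1 / (z ^ (1/2 : ℂ) + (↑τ + z) ^ (1/2 : ℂ))‖ ≤
        C * ‖z‖ ^ s / (1 + ‖z‖ ^ (2 * s)) := by
  obtain ⟨hφ0, hφπ⟩ := hφ
  have hπ := Real.pi_pos
  have hcosφ2 : 0 < Real.cos (φ / 2) :=
    Real.cos_pos_of_mem_Ioo ⟨by linarith, by linarith⟩
  have hεc : 0 < min 1 (1 + Real.cos φ) := by
    refine lt_min one_pos ?_
    have := Real.strictAntiOn_cos ⟨hφ0.le, hφπ.le⟩ ⟨hπ.le, le_refl π⟩ hφπ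
    rw [Real.cos_pi] at this
    linarith
  have hε : 0 < min 1 (1 + Real.cos φ) * min (τ ^ 2) 1 / 2 := by
    have h2 : (0:ℝ) < min (τ ^ 2) 1 := lt_min (by positivity) one_pos
    positivity
  set ε := min 1 (1 + Real.cos φ) * min (τ ^ 2) 1 / 2 with hε_def
  constructor
  · intro z hz
    obtain ⟨hz0, harg⟩ := hz
    obtain ⟨hτz0, hargw, hrez, hrew⟩ := sector_aux τ φ hτ hφ0 hφπ z hz0 harg
    have hR : 0 < ‖↑τ + z‖ := norm_pos_iff.2 hτz0
    have hAne : ((↑τ : ℂ) + z) ^ (1/2 : ℂ) ≠ 0 := by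
      intro h
      have h2 := abs_half_pow _ hτz0
      rw [h, norm_zero] at h2
      exact (Real.rpow_pos_of_pos hR (1/2 : ℝ)).ne' h2.symm
    have hBre : 0 < (z ^ (1/2 : ℂ) + (↑τ + z) ^ (1/2 : ℂ)).re := by
      rw [Complex.add_re]
      have := mul_pos (Real.rpow_pos_of_pos hR (1/2 : ℝ)) hcosφ2
      linarith
    have hBne : z ^ (1/2 : ℂ) + (↑τ + z) ^ (1/2 : ℂ) ≠ 0 := by
      intro h
      rw [h, Complex.zero_re] at hBre
      exact lt_irrefl _ hBre
    have hzslit : z ∈ Complex.slitPlane := by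
      refine Complex.mem_slitPlane_iff_arg.2 ⟨fun h => ?_, hz0⟩
      rw [h, _root_.abs_of_nonneg hπ.le] at harg
      linarith
    have hwslit : (↑τ : ℂ) + z ∈ Complex.slitPlane := by
      refine Complex.mem_slitPlane_iff_arg.2 ⟨fun h => ?_, hτz0⟩
      rw [h, _root_.abs_of_nonneg hπ.le] at hargw
      linarith
    have d1 : DifferentiableAt ℂ (fun w : ℂ => ((↑τ : ℂ) + w) ^ (1/2 : ℂ)) z :=
      ((differentiableAt_const _).add differentiableAt_id).cpow
        (differentiableAt_const _) hwslit
    have d2 : DifferentiableAt ℂ (fun w : ℂ => w ^ (1/2 : ℂ)) z :=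
      differentiableAt_id.cpow (differentiableAt_const _) hzslit
    exact (((differentiableAt_const 1).div d1 hAne).sub
      ((differentiableAt_const 1).div (d2.add d1) hBne)).differentiableWithinAt
  · refine ⟨(Real.sqrt ε * Real.cos (φ / 2))⁻¹, 1/2,
      inv_pos.2 (mul_pos (Real.sqrt_pos.2 hε) hcosφ2), by norm_num, ?_⟩
    intro z hz
    obtain ⟨hz0, harg⟩ := hz
    obtain ⟨hτz0, hargw, hrez, hrew⟩ := sector_aux τ φ hτ hφ0 hφπ z hz0 harg
    have hr : 0 < ‖z‖ := norm_pos_iff.2 hz0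
    have hR : 0 < ‖↑τ + z‖ := norm_pos_iff.2 hτz0
    have hAne : ((↑τ : ℂ) + z) ^ (1/2 : ℂ) ≠ 0 := by
      intro h
      have h2 := abs_half_pow _ hτz0
      rw [h, norm_zero] at h2
      exact (Real.rpow_pos_of_pos hR (1/2 : ℝ)).ne' h2.symm
    have hBre : 0 < (z ^ (1/2 : ℂ) + (↑τ + z) ^ (1/2 : ℂ)).re := by
      rw [Complex.add_re]
      have := mul_pos (Real.rpow_pos_of_pos hR (1/2 : ℝ)) hcosφ2
      linarith
    have hBne : z ^ (1/2 : ℂ) + (↑τ + z) ^ (1/2 : ℂ) ≠ 0 := by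
      intro h
      rw [h, Complex.zero_re] at hBre
      exact lt_irrefl _ hBre
    have hid : 1 / ((↑τ + z) ^ (1/2 : ℂ)) - 1 / (z ^ (1/2 : ℂ) + (↑τ + z) ^ (1/2 : ℂ))
        = z ^ (1/2 : ℂ) /
          (((↑τ + z) ^ (1/2 : ℂ)) * (z ^ (1/2 : ℂ) + (↑τ + z) ^ (1/2 : ℂ))) := by
      field_simp
      ring
    rw [hid, norm_div, norm_mul, abs_half_pow z hz0, abs_half_pow _ hτz0]
    have h1 : ‖↑τ + z‖ ^ (1/2 : ℝ) * Real.cos (φ / 2) ≤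
        ‖z ^ (1/2 : ℂ) + (↑τ + z) ^ (1/2 : ℂ)‖ := by
      refine le_trans ?_ (Complex.re_le_norm _)
      rw [Complex.add_re]
      linarith
    have h2 : ‖↑τ + z‖ ^ (1/2 : ℝ) * (‖↑τ + z‖ ^ (1/2 : ℝ) *
        Real.cos (φ / 2)) = ‖↑τ + z‖ * Real.cos (φ / 2) := by
      rw [← mul_assoc, ← Real.rpow_add hR]
      norm_num
    have hden : Real.sqrt ε * (1 + ‖z‖) * Real.cos (φ / 2) ≤
        ‖↑τ + z‖ ^ (1/2 : ℝ) *
          ‖z ^ (1/2 : ℂ) + (↑τ + z) ^ (1/2 : ℂ)‖ := by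
      calc Real.sqrt ε * (1 + ‖z‖) * Real.cos (φ / 2)
          ≤ ‖↑τ + z‖ * Real.cos (φ / 2) :=
            mul_le_mul_of_nonneg_right (abs_add_lower τ φ hτ hφ0 hφπ z hz0 harg) hcosφ2.le
        _ = ‖↑τ + z‖ ^ (1/2 : ℝ) *
            (‖↑τ + z‖ ^ (1/2 : ℝ) * Real.cos (φ / 2)) := h2.symm
        _ ≤ _ := mul_le_mul_of_nonneg_left h1 (Real.rpow_nonneg (norm_nonneg _) _)
    have hmain : ‖z‖ ^ (1/2 : ℝ) /
        (‖↑τ + z‖ ^ (1/2 : ℝ) *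
          ‖z ^ (1/2 : ℂ) + (↑τ + z) ^ (1/2 : ℂ)‖) ≤
        ‖z‖ ^ (1/2 : ℝ) /
          (Real.sqrt ε * (1 + ‖z‖) * Real.cos (φ / 2)) := by
      gcongr
    refine hmain.trans (le_of_eq ?_)
    have h2s : ‖z‖ ^ (2 * (1/2 : ℝ)) = ‖z‖ := by
      norm_num
    rw [h2s, inv_mul_eq_div, div_div,
      show Real.sqrt ε * Real.cos (φ / 2) * (1 + ‖z‖)
        = Real.sqrt ε * (1 + ‖z‖) * Real.cos (φ / 2) by ring]
end

section
/- Let (N, d) be a metric space and let D denote the product distance on N × ℝ as defined in the context. Let α ∈ (0, √3/2), z ∈ N, u > 0, and suppose x ∈ N satisfies d(x, z) ≤ α·u. Let (y, v) ∈ N × ℝ satisfy d(y, z) > 2α·v. Set X := (x, u), Y := (y, v), Z := (z, u). Then D(X, Y) ≥ (1 − √(4α² + 1)/2) · D(Y, Z). -/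
set_option maxHeartbeats 1000000


open Real

/-- Cone-separation estimate: if `X = (x,u)` lies in the cone of aperture `α < √3/2` with
vertex `z` (i.e. `d(x,z) ≤ αu`) and `Y = (y,v)` lies outside the cone of aperture `2α`
(i.e. `d(y,z) > 2αv`), then with `Z = (z,u)` and the product distance
`D((x,u),(y,v)) = √(d(x,y)² + (u−v)²)` one has
`D(X,Y) ≥ (1 − √(4α² + 1)/2) · D(Y,Z)`. -/
theorem cone_distance_comparison {N : Type*} [MetricSpace N]
    (α : ℝ) (hα : α ∈ Set.Ioo 0 (Real.sqrt 3 / 2))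
    (z x y : N) (u v : ℝ) (hu : 0 < u)
    (hx : dist x z ≤ α * u) (hy : 2 * α * v < dist y z) :
    (1 - Real.sqrt (4 * α ^ 2 + 1) / 2) *
        Real.sqrt (dist y z ^ 2 + (v - u) ^ 2) ≤
      Real.sqrt (dist x y ^ 2 + (u - v) ^ 2) := by
  obtain ⟨hα0, hα2⟩ := hα
  have h1 : (u - v) ^ 2 = (v - u) ^ 2 := by ring
  rw [h1]
  set a := dist y z with ha
  set b := dist x z with hb
  set c := dist x y with hc
  have hb0 : (0:ℝ) ≤ b := dist_nonneg
  have hc0 : (0:ℝ) ≤ c := dist_nonneg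
  have ha0 : (0:ℝ) ≤ a := dist_nonneg
  have htri : a ≤ c + b := by
    rw [ha, hb, hc, dist_comm x y]; exact dist_triangle y x z
  set t2 := (v - u) ^ 2 with ht2
  have ht20 : (0:ℝ) ≤ t2 := sq_nonneg _
  -- key1 : α u ≤ √(4α²+1)/2 · √(a² + t2)
  have key1 : α * u ≤ Real.sqrt (4 * α ^ 2 + 1) / 2 * Real.sqrt (a ^ 2 + t2) := by
    have hk : Real.sqrt (4 * α ^ 2 + 1) / 2 * Real.sqrt (a ^ 2 + t2)
        = Real.sqrt ((4 * α ^ 2 + 1) / 4 * (a ^ 2 + t2)) := by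
      rw [Real.sqrt_mul (by positivity),
        show ((4 * α ^ 2 + 1) / 4 : ℝ) = (4 * α ^ 2 + 1) * (1/2)^2 by ring,
        Real.sqrt_mul (by positivity), Real.sqrt_sq (by norm_num)]
      ring
    rw [hk, Real.le_sqrt (by positivity) (by positivity)]
    rcases le_or_gt v 0 with hv | hv
    · nlinarith [sq_nonneg a, mul_nonneg (neg_nonneg.2 hv) hu.le, sq_nonneg v,
        sq_nonneg (α * (v - u)), mul_pos hu hu]
    · have hav2 : (2 * α * v) ^ 2 ≤ a ^ 2 := by
        have h2 : 0 ≤ 2 * α * v := by positivity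
        nlinarith [hy]
      nlinarith [sq_nonneg ((4 * α ^ 2 + 1) * v - u), hav2,
        mul_nonneg (sq_nonneg α) (sub_nonneg.2 hav2)]
  -- key2 : √(a²+t2) ≤ √(c²+t2) + b
  have key2 : Real.sqrt (a ^ 2 + t2) ≤ Real.sqrt (c ^ 2 + t2) + b := by
    have hS : Real.sqrt (c ^ 2 + t2) ^ 2 = c ^ 2 + t2 :=
      Real.sq_sqrt (by positivity)
    have hcle : c ≤ Real.sqrt (c ^ 2 + t2) := by
      rw [Real.le_sqrt hc0 (by positivity)]; linarith
    have h2 : Real.sqrt (a ^ 2 + t2) ≤ Real.sqrt ((c + b) ^ 2 + t2) :=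
      Real.sqrt_le_sqrt (by nlinarith)
    have h3 : Real.sqrt ((c + b) ^ 2 + t2) ≤ Real.sqrt (c ^ 2 + t2) + b := by
      rw [Real.sqrt_le_iff]
      constructor
      · positivity
      · nlinarith [hcle, hS, hb0]
    linarith
  -- combine
  have hexp : (1 - Real.sqrt (4 * α ^ 2 + 1) / 2) * Real.sqrt (a ^ 2 + t2)
      = Real.sqrt (a ^ 2 + t2)
        - Real.sqrt (4 * α ^ 2 + 1) / 2 * Real.sqrt (a ^ 2 + t2) := by ring
  linarith [key1, key2, hx]
end

section
/- Let (N, d) be a metric space, let z, y ∈ N, let α > 0, u > 0, and let v ∈ ℝ satisfy d(y, z) > 2α·v. Then √(d(y, z)² + (v − u)²) ≥ 2α·u / √(4α² + 1). -/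
open Real

/-- If `(y,v)` lies outside the cone `{(y,v) : d(y,z) ≤ 2αv}` of aperture `2α` with vertex
`z`, then its product distance to the point `(z,u)` is at least `2αu/√(4α² + 1)`. -/
theorem distance_to_cone_complement {N : Type*} [MetricSpace N]
    (α u : ℝ) (hα : 0 < α) (hu : 0 < u) (z y : N) (v : ℝ)
    (hy : 2 * α * v < dist y z) :
    2 * α * u / Real.sqrt (4 * α ^ 2 + 1) ≤
      Real.sqrt (dist y z ^ 2 + (v - u) ^ 2) := by
  have hL : 0 ≤ 2 * α * u / Real.sqrt (4 * α ^ 2 + 1) := by positivity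
  rw [Real.le_sqrt hL (by positivity)]
  have hsq : Real.sqrt (4 * α ^ 2 + 1) ^ 2 = 4 * α ^ 2 + 1 :=
    Real.sq_sqrt (by positivity)
  rw [div_pow, hsq, div_le_iff₀ (by positivity)]
  have hd : 0 ≤ dist y z := dist_nonneg
  have key : 4 * α ^ 2 * u ^ 2 ≤ (dist y z ^ 2 + (v - u) ^ 2) * (4 * α ^ 2 + 1) := by
    rcases le_or_gt v 0 with hv | hv
    · have h1 : u ^ 2 ≤ (v - u) ^ 2 := by nlinarith [mul_nonneg (neg_nonneg.2 hv) hu.le]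
      have h2 : u ^ 2 * (4 * α ^ 2 + 1) ≤ (dist y z ^ 2 + (v - u) ^ 2) * (4 * α ^ 2 + 1) := by
        apply mul_le_mul_of_nonneg_right _ (by positivity)
        nlinarith [sq_nonneg (dist y z)]
      nlinarith [sq_nonneg α, sq_nonneg u]
    · have hr2 : 4 * α ^ 2 * v ^ 2 ≤ dist y z ^ 2 := by
        nlinarith [mul_pos (mul_pos two_pos hα) hv]
      have h2 := mul_le_mul_of_nonneg_right hr2 (show (0:ℝ) ≤ 4 * α ^ 2 + 1 by positivity)
      nlinarith [sq_nonneg ((4 * α ^ 2 + 1) * v - u)]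
  nlinarith [key]
end
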